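/- arXiv:0911.2594 — 8 statements merged into one kernel-verified Lean document; each statement's English description precedes it below -/
import Mathlib

section
/- Let m and e be positive integers. Set e_1 := ∏_{p prime, p ∣ m} p^{v_p(e)}, where v_p(e) denotes the p-adic valuation of e, and e_2 := e / e_1. Then in ℤ[X] one has Φ_m(X^e) = Φ_{m e_1}(X^{e_2}) = ∏_{d ∣ e_2} Φ_{m e_1 d}(X). -/
open Polynomial Finset

/-- Product over divisors of a coprime product. -/
private lemma prod_divisors_coprime_mul {M : Type*} [CommMonoid M] {a b : ℕ}
    (hab : a.Coprime b) (ha : a ≠ 0) (hb : b ≠ 0) (f : ℕ → M) :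
    ∏ d ∈ (a * b).divisors, f d = ∏ c ∈ a.divisors, ∏ d ∈ b.divisors, f (c * d) := by
  rw [← Finset.prod_product']
  apply Finset.prod_nbij' (fun d => (Nat.gcd d a, Nat.gcd d b)) (fun x => x.1 * x.2)
  · intro d hd
    rw [Nat.mem_divisors] at hd
    simp only [Finset.mem_product, Nat.mem_divisors]
    exact ⟨⟨Nat.gcd_dvd_right _ _, ha⟩, ⟨Nat.gcd_dvd_right _ _, hb⟩⟩
  · intro x hx
    simp only [Finset.mem_product, Nat.mem_divisors] at hx
    exact Nat.mem_divisors.2 ⟨mul_dvd_mul hx.1.1 hx.2.1, mul_ne_zero ha hb⟩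
  · intro d hd
    rw [Nat.mem_divisors] at hd
    rw [← Nat.Coprime.gcd_mul _ hab, Nat.gcd_eq_left hd.1]
  · intro x hx
    simp only [Finset.mem_product, Nat.mem_divisors] at hx
    have h1 : (x.1 : ℕ).Coprime x.2 := Nat.Coprime.coprime_dvd_left hx.1.1
      (Nat.Coprime.coprime_dvd_right hx.2.1 hab)
    have e1 : Nat.gcd (x.1 * x.2) a = x.1 := by
      rw [Nat.gcd_comm, Nat.Coprime.gcd_mul _ h1, Nat.gcd_comm, Nat.gcd_eq_left hx.1.1,
        Nat.gcd_comm, Nat.Coprime.gcd_eq_one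
          (Nat.Coprime.coprime_dvd_left hx.2.1 hab.symm), mul_one]
    have e2 : Nat.gcd (x.1 * x.2) b = x.2 := by
      rw [Nat.gcd_comm, Nat.Coprime.gcd_mul _ h1,
        Nat.Coprime.gcd_eq_one (Nat.Coprime.coprime_dvd_left hx.1.1 hab).symm,
        one_mul, Nat.gcd_comm, Nat.gcd_eq_left hx.2.1]
    rw [e1, e2]
  · intro d hd
    rw [Nat.mem_divisors] at hd
    rw [← Nat.Coprime.gcd_mul _ hab, Nat.gcd_eq_left hd.1]

/-- If every prime of `n` divides `N`, then `expand n Φ_N = Φ_{N n}`. -/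
private lemma expand_cyclotomic_of_dvd (n : ℕ) (hn : 0 < n) :
    ∀ N : ℕ, 0 < N → (∀ p : ℕ, p.Prime → p ∣ n → p ∣ N) →
      expand ℤ n (cyclotomic N ℤ) = cyclotomic (N * n) ℤ := by
  induction n using Nat.strong_induction_on with
  | _ n ih =>
    intro N hN hdvd
    rcases eq_or_lt_of_le (show 1 ≤ n from hn) with h1 | h1
    · simp [← h1]
    · have h2 : 2 ≤ n := h1
      set p := n.minFac with hp
      have hpp : p.Prime := Nat.minFac_prime (by omega)
      have hpn : p ∣ n := Nat.minFac_dvd n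
      have hnp : n / p * p = n := Nat.div_mul_cancel hpn
      have hdivlt : n / p < n := Nat.div_lt_self (by omega) hpp.one_lt
      have hdivpos : 0 < n / p := Nat.div_pos (Nat.minFac_le (by omega)) hpp.pos
      rw [← hnp, ← expand_expand, cyclotomic_expand_eq_cyclotomic hpp (hdvd p hpp hpn),
        ih (n / p) hdivlt hdivpos (N * p) (Nat.mul_pos hN hpp.pos)
          (fun q hq hqd => dvd_mul_of_dvd_left (hdvd q hq (hqd.trans (Nat.div_dvd_of_dvd hpn))) p),
        mul_assoc, Nat.mul_div_cancel' hpn]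
      rw [hnp]

private lemma expand_pow_cyclotomic {p : ℕ} (hp : p.Prime) {N : ℕ} (hN : 0 < N)
    (hpN : ¬ p ∣ N) (k : ℕ) :
    expand ℤ (p ^ k) (cyclotomic N ℤ) = ∏ j ∈ range (k + 1), cyclotomic (N * p ^ j) ℤ := by
  induction k with
  | zero => simp
  | succ k ih =>
    rw [pow_succ, ← expand_expand, cyclotomic_expand_eq_cyclotomic_mul hp hpN, map_mul,
      expand_cyclotomic_of_dvd (p ^ k) (pow_pos hp.pos k) (N * p) (Nat.mul_pos hN hp.pos)
        (fun q hq hqd => dvd_mul_of_dvd_right ((Nat.prime_dvd_prime_iff_eq hq hp).1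
          (hq.dvd_of_dvd_pow hqd) ▸ dvd_rfl) N),
      ih, show N * p * p ^ k = N * p ^ (k + 1) by ring]
    conv_rhs => rw [Finset.prod_range_succ]
    exact mul_comm _ _

/-- If no prime of `n` divides `N`, then `expand n Φ_N = ∏_{d ∣ n} Φ_{N d}`. -/
private lemma expand_cyclotomic_of_coprime (n : ℕ) :
    0 < n → ∀ N : ℕ, 0 < N → (∀ p : ℕ, p.Prime → p ∣ n → ¬ p ∣ N) →
      expand ℤ n (cyclotomic N ℤ) = ∏ d ∈ n.divisors, cyclotomic (N * d) ℤ := by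
  induction n using Nat.recOnPrimeCoprime with
  | zero => exact fun h => absurd h (lt_irrefl 0)
  | prime_pow p k hp =>
    intro _ N hN hcop
    rcases Nat.eq_zero_or_pos k with hk | hk
    · subst hk; simp
    · rw [expand_pow_cyclotomic hp hN
        (hcop p hp (dvd_pow_self p hk.ne')) k,
        Nat.prod_divisors_prime_pow hp]
  | coprime a b ha hb hab iha ihb =>
    intro _ N hN hcop
    have ha0 : 0 < a := by omega
    have hb0 : 0 < b := by omega
    have key : ∀ p : ℕ, p.Prime → p ∣ a → ¬ p ∣ b := fun p hp hpa hpb =>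
      hp.one_lt.ne' (Nat.dvd_one.mp (hab ▸ Nat.dvd_gcd hpa hpb))
    rw [prod_divisors_coprime_mul hab ha0.ne' hb0.ne', mul_comm a b, ← expand_expand,
      iha ha0 N hN (fun p hp hpd => hcop p hp (hpd.mul_right b)), map_prod]
    apply Finset.prod_congr rfl
    intro c hc
    rw [Nat.mem_divisors] at hc
    have hc0 : 0 < c := Nat.pos_of_dvd_of_pos hc.1 ha0
    rw [ihb hb0 (N * c) (Nat.mul_pos hN hc0)
      (fun p hp hpd => by
        rw [hp.dvd_mul]
        push_neg
        exact ⟨hcop p hp (hpd.mul_left a), fun hpc => key p hp (hpc.trans hc.1) hpd⟩)]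
    apply Finset.prod_congr rfl
    intro d _
    rw [mul_assoc]

/-- For positive integers `m, e`, with `e₁ := ∏_{p ∣ m} p^{v_p(e)}` and `e₂ := e / e₁`,
one has `Φ_m(X^e) = Φ_{m e₁}(X^{e₂}) = ∏_{d ∣ e₂} Φ_{m e₁ d}(X)` in `ℤ[X]`. -/
theorem cyclotomic_comp_pow (m e : ℕ) (hm : 0 < m) (he : 0 < e)
    (e₁ : ℕ) (he₁ : e₁ = ∏ p ∈ m.primeFactors, p ^ (e.factorization p))
    (e₂ : ℕ) (he₂ : e₂ = e / e₁) :
    (cyclotomic m ℤ).comp (X ^ e) = (cyclotomic (m * e₁) ℤ).comp (X ^ e₂) ∧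
    (cyclotomic m ℤ).comp (X ^ e) = ∏ d ∈ e₂.divisors, cyclotomic (m * e₁ * d) ℤ := by
  classical
  -- e₁ divides e
  have hgen : ∀ s : Finset ℕ, (∀ p ∈ s, p.Prime) → (∏ p ∈ s, p ^ (e.factorization p)) ∣ e := by
    intro s
    induction s using Finset.induction_on with
    | empty => simp
    | @insert q t hq ih =>
      intro hs
      rw [Finset.prod_insert hq]
      refine Nat.Coprime.mul_dvd_of_dvd_of_dvd ?_ (Nat.ordProj_dvd e q)
        (ih fun p hp => hs p (Finset.mem_insert_of_mem hp))
      refine Nat.Coprime.pow_left _ ?_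
      rw [Nat.coprime_prod_right_iff]
      intro p hp
      exact Nat.Coprime.pow_right _ ((Nat.coprime_primes (hs q (Finset.mem_insert_self q t))
        (hs p (Finset.mem_insert_of_mem hp))).2 (fun h => hq (h ▸ hp)))
  have hd1 : e₁ ∣ e := he₁ ▸ hgen m.primeFactors (fun p hp => Nat.prime_of_mem_primeFactors hp)
  have he1pos : 0 < e₁ := Nat.pos_of_dvd_of_pos hd1 he
  have hee : e₁ * e₂ = e := by rw [he₂, Nat.mul_div_cancel' hd1]
  have he2pos : 0 < e₂ := by
    rcases Nat.eq_zero_or_pos e₂ with h | h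
    · rw [h, mul_zero] at hee; omega
    · exact h
  -- every prime of e₁ divides m
  have hprimes₁ : ∀ p : ℕ, p.Prime → p ∣ e₁ → p ∣ m := by
    intro p hp hpd
    rw [he₁] at hpd
    obtain ⟨q, hq, hpq⟩ := hp.prime.exists_mem_finset_dvd hpd
    have := (Nat.prime_dvd_prime_iff_eq hp (Nat.prime_of_mem_primeFactors hq)).1
      (hp.dvd_of_dvd_pow hpq)
    exact this ▸ Nat.dvd_of_mem_primeFactors hq
  -- no prime of e₂ divides m * e₁
  have hcop : ∀ p : ℕ, p.Prime → p ∣ e₂ → ¬ p ∣ m * e₁ := by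
    intro p hp hpd hpm'
    have hpm : p ∣ m := by
      rcases hp.dvd_mul.1 hpm' with h | h
      · exact h
      · exact hprimes₁ p hp h
    have h1 : p ^ (e.factorization p) ∣ e₁ := by
      rw [he₁]
      exact Finset.dvd_prod_of_mem _ (Nat.mem_primeFactors.2 ⟨hp, hpm, hm.ne'⟩)
    have h2 : p ^ (e.factorization p + 1) ∣ e₁ * e₂ := by
      rw [pow_succ]; exact mul_dvd_mul h1 hpd
    rw [hee] at h2
    exact Nat.pow_succ_factorization_not_dvd he.ne' hp h2
  have key1 : expand ℤ e₁ (cyclotomic m ℤ) = cyclotomic (m * e₁) ℤ :=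
    expand_cyclotomic_of_dvd e₁ he1pos m hm hprimes₁
  have estep : (cyclotomic m ℤ).comp (X ^ e) = expand ℤ e₂ (cyclotomic (m * e₁) ℤ) := by
    rw [← expand_eq_comp_X_pow, ← hee, mul_comm e₁ e₂, expand_mul, key1]
  constructor
  · rw [estep, expand_eq_comp_X_pow]
  · rw [estep, expand_cyclotomic_of_coprime e₂ he2pos (m * e₁) (Nat.mul_pos hm he1pos) hcop]
end

section
/- Let s ≥ 1, let m_1, …, m_s be squarefree positive integers, and let m be a positive integer dividing lcm(m_1, …, m_s). Then m is squarefree and Ψ(m) ≤ ∑_{i=1}^s Ψ(m_i) − 2(s − 1). -/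
/-- `Ψ(m) := 2 + ∑_{p prime, p ∣ m} (p − 2)`. -/
def Psi (m : ℕ) : ℕ := 2 + ∑ p ∈ m.primeFactors, (p - 2)

lemma squarefree_lcm_nat {a b : ℕ} (ha : Squarefree a) (hb : Squarefree b) :
    Squarefree (Nat.lcm a b) := by
  have ha0 := ha.ne_zero
  have hb0 := hb.ne_zero
  rw [Nat.squarefree_iff_factorization_le_one (Nat.lcm_ne_zero ha0 hb0)]
  intro p
  rw [Nat.factorization_lcm ha0 hb0]
  exact sup_le ((Nat.squarefree_iff_factorization_le_one ha0).1 ha p)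
    ((Nat.squarefree_iff_factorization_le_one hb0).1 hb p)

lemma squarefree_finset_lcm {ι : Type*} (t : Finset ι) (f : ι → ℕ)
    (h : ∀ i ∈ t, Squarefree (f i)) : Squarefree (t.lcm f) := by
  classical
  induction t using Finset.induction_on with
  | empty => simpa using squarefree_one
  | insert _ _ hx ih =>
    rw [Finset.lcm_insert]
    exact squarefree_lcm_nat (h _ (Finset.mem_insert_self _ _))
      (ih fun i hi => h i (Finset.mem_insert_of_mem hi))

lemma prime_dvd_finset_lcm {ι : Type*} {t : Finset ι} {f : ι → ℕ} {p : ℕ}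
    (hp : p.Prime) (h : p ∣ t.lcm f) : ∃ i ∈ t, p ∣ f i := by
  classical
  induction t using Finset.induction_on with
  | empty =>
    simp only [Finset.lcm_empty] at h
    exact absurd (Nat.le_of_dvd one_pos h) (by have := hp.two_le; omega)
  | insert _ _ hx ih =>
    rw [Finset.lcm_insert] at h
    have h' : p ∣ _ * _ := h.trans (lcm_dvd (dvd_mul_right _ _) (dvd_mul_left _ _))
    rcases (Nat.Prime.dvd_mul hp).1 h' with h | h
    · exact ⟨_, Finset.mem_insert_self _ _, h⟩
    · obtain ⟨i, hi, hd⟩ := ih h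
      exact ⟨i, Finset.mem_insert_of_mem hi, hd⟩

lemma sum_biUnion_le_nat {ι α : Type*} [DecidableEq α] (t : Finset ι) (f : ι → Finset α)
    (g : α → ℕ) : ∑ x ∈ t.biUnion f, g x ≤ ∑ i ∈ t, ∑ x ∈ f i, g x := by
  classical
  induction t using Finset.induction_on with
  | empty => simp
  | @insert a t hx ih =>
    rw [Finset.biUnion_insert, Finset.sum_insert hx]
    calc ∑ x ∈ f a ∪ t.biUnion f, g x
        ≤ ∑ x ∈ f a, g x + ∑ x ∈ t.biUnion f \ f a, g x := by
          rw [← Finset.sum_union Finset.disjoint_sdiff]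
          exact Finset.sum_le_sum_of_subset (by
            intro x hx'
            rcases Finset.mem_union.1 hx' with h | h
            · exact Finset.mem_union_left _ h
            · by_cases hxa : x ∈ f a
              · exact Finset.mem_union_left _ hxa
              · exact Finset.mem_union_right _ (Finset.mem_sdiff.2 ⟨h, hxa⟩))
      _ ≤ ∑ x ∈ f a, g x + ∑ x ∈ t.biUnion f, g x :=
          Nat.add_le_add_left (Finset.sum_le_sum_of_subset (Finset.sdiff_subset)) _
      _ ≤ _ := Nat.add_le_add_left ih _

/-- If `m₁, …, m_s` are squarefree positive integers and `m` is a positive integer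
dividing `lcm(m₁, …, m_s)`, then `m` is squarefree and
`Ψ(m) ≤ ∑ Ψ(mᵢ) − 2(s − 1)`. -/
theorem squarefree_and_psi_le_of_dvd_lcm (s : ℕ) (hs : 1 ≤ s) (m : Fin s → ℕ)
    (hpos : ∀ i, 0 < m i) (hsf : ∀ i, Squarefree (m i))
    (M : ℕ) (hM : 0 < M) (hdvd : M ∣ Finset.univ.lcm m) :
    Squarefree M ∧ (Psi M : ℤ) ≤ (∑ i, (Psi (m i) : ℤ)) - 2 * ((s : ℤ) - 1) := by
  have hsfM : Squarefree M :=
    (squarefree_finset_lcm _ _ (fun i _ => hsf i)).squarefree_of_dvd hdvd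
  refine ⟨hsfM, ?_⟩
  have hsub : M.primeFactors ⊆ Finset.univ.biUnion fun i => (m i).primeFactors := by
    intro p hp
    rw [Nat.mem_primeFactors] at hp
    obtain ⟨i, _, hd⟩ := prime_dvd_finset_lcm hp.1 (hp.2.1.trans hdvd)
    exact Finset.mem_biUnion.2 ⟨i, Finset.mem_univ i,
      Nat.mem_primeFactors.2 ⟨hp.1, hd, (hpos i).ne'⟩⟩
  have key : ∑ p ∈ M.primeFactors, (p - 2) ≤ ∑ i, ∑ p ∈ (m i).primeFactors, (p - 2) :=
    (Finset.sum_le_sum_of_subset hsub).trans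
      (sum_biUnion_le_nat _ _ _)
  have hrhs : (∑ i, (Psi (m i) : ℤ)) - 2 * ((s : ℤ) - 1)
      = 2 + ∑ i, ((∑ p ∈ (m i).primeFactors, (p - 2) : ℕ) : ℤ) := by
    simp only [Psi]
    push_cast
    rw [Finset.sum_add_distrib]
    simp [Finset.card_univ]
    ring
  rw [hrhs]
  simp only [Psi]
  push_cast
  have : ((∑ p ∈ M.primeFactors, (p - 2) : ℕ) : ℤ)
      ≤ ∑ i, ((∑ p ∈ (m i).primeFactors, (p - 2) : ℕ) : ℤ) := by
    rw [← Nat.cast_sum]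
    exact_mod_cast key
  push_cast at this
  linarith
end

section
/- Let N ≥ 1 and let Q_N := {m ∈ ℕ, m ≥ 1 : m is squarefree and Ψ(m) ≤ N}. Then #Q_N ≤ exp(3 √(N log N)). -/
set_option maxHeartbeats 1000000

open Finset Real

lemma primesBelow_card_le (T : ℕ) : (Nat.primesBelow T).card ≤ T / 2 + 2 := by
  classical
  set P := Nat.primesBelow T
  have hsplit : P.card = (P.filter (fun p => p = 2)).card + (P.filter (fun p => ¬ p = 2)).card := by
    rw [← Finset.card_union_of_disjoint (Finset.disjoint_filter_filter_not P P _),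
      Finset.filter_union_filter_not_eq]
  have h1 : (P.filter (fun p => p = 2)).card ≤ 1 := by
    apply Finset.card_le_one.mpr
    intro a ha b hb
    simp only [Finset.mem_filter] at ha hb
    omega
  have h2 : (P.filter (fun p => ¬ p = 2)).card ≤ T / 2 + 1 := by
    have := Finset.card_le_card_of_injOn (s := P.filter (fun p => ¬ p = 2)) (f := (· / 2)) (t := Finset.range (T / 2 + 1)) ?_ ?_
    · simpa using this
    · intro a ha
      simp only [Finset.mem_coe, Finset.mem_filter] at ha
      have := (Nat.mem_primesBelow.mp ha.1).1
      simp only [Finset.mem_coe, Finset.mem_range]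
      omega
    · intro a ha b hb hab
      simp only [Finset.coe_filter, Set.mem_setOf_eq, Finset.mem_coe] at ha hb
      have hoa : a % 2 = 1 := Nat.odd_iff.mp ((Nat.mem_primesBelow.mp ha.1).2.odd_of_ne_two ha.2)
      have hob : b % 2 = 1 := Nat.odd_iff.mp ((Nat.mem_primesBelow.mp hb.1).2.odd_of_ne_two hb.2)
      simp only at hab
      omega
  omega


lemma stepA (N : ℕ) (hN : 1 ≤ N) :
    ({m : ℕ | 1 ≤ m ∧ Squarefree m ∧ Psi m ≤ N}.ncard : ℕ)
      ≤ (((N+3).primesBelow.powerset.filter (fun S => ∑ p ∈ S, (p-2) ≤ N)).card) := by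
  classical
  set A : Set ℕ := {m : ℕ | 1 ≤ m ∧ Squarefree m ∧ Psi m ≤ N}
  set T : Finset (Finset ℕ) := (N+3).primesBelow.powerset.filter (fun S => ∑ p ∈ S, (p-2) ≤ N)
  have hinj : Set.InjOn Nat.primeFactors A := by
    intro a ha b hb hab
    have := Nat.prod_primeFactors_of_squarefree ha.2.1
    have := Nat.prod_primeFactors_of_squarefree hb.2.1
    rw [← Nat.prod_primeFactors_of_squarefree ha.2.1, ← Nat.prod_primeFactors_of_squarefree hb.2.1, hab]
  have hsub : Nat.primeFactors '' A ⊆ ↑T := by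
    rintro _ ⟨m, hm, rfl⟩
    obtain ⟨hm1, hmsq, hmpsi⟩ := hm
    have hsum : ∑ p ∈ m.primeFactors, (p - 2) ≤ N := by
      have : Psi m = 2 + ∑ p ∈ m.primeFactors, (p - 2) := rfl
      omega
    simp only [T, Finset.coe_filter, Set.mem_setOf_eq, Finset.mem_powerset]
    refine ⟨fun p hp => ?_, hsum⟩
    have hp' := Nat.prime_of_mem_primeFactors hp
    have hle : p - 2 ≤ ∑ q ∈ m.primeFactors, (q - 2) :=
      Finset.single_le_sum (f := fun q => q - 2) (fun q _ => Nat.zero_le _) hp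
    have := hp'.two_le
    exact Nat.mem_primesBelow.mpr ⟨by omega, hp'⟩
  calc (A.ncard : ℕ) = (Nat.primeFactors '' A).ncard := (Set.ncard_image_of_injOn hinj).symm
    _ ≤ (↑T : Set (Finset ℕ)).ncard := Set.ncard_le_ncard hsub (T.finite_toSet)
    _ = T.card := Set.ncard_coe_finset T

lemma stepB (N T : ℕ) (hT : 3 ≤ T) :
    (((N+3).primesBelow.powerset.filter (fun S => ∑ p ∈ S, (p-2) ≤ N)).card
      ≤ 2^(T/2+2) * ((N/(T-2)+1) * (N+2)^(N/(T-2)))) := by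
  classical
  set P := (N+3).primesBelow
  set k := N / (T-2)
  set 𝒮 := P.powerset.filter (fun S => ∑ p ∈ S, (p-2) ≤ N)
  set target := (Nat.primesBelow T).powerset ×ˢ
    ((Finset.range (k+1)).biUnion fun j => Finset.powersetCard j P)
  have hcard : 𝒮.card ≤ target.card := by
    apply Finset.card_le_card_of_injOn
      (f := fun S => (S.filter (· < T), S.filter (fun p => ¬ p < T)))
    · intro S hS
      simp only [𝒮, Finset.mem_coe, Finset.mem_filter, Finset.mem_powerset] at hS
      obtain ⟨hSsub, hSsum⟩ := hS
      simp only [target, Finset.mem_coe, Finset.mem_product, Finset.mem_powerset, Finset.mem_biUnion,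
        Finset.mem_range]
      constructor
      · intro p hp
        simp only [Finset.mem_filter] at hp
        have := Nat.mem_primesBelow.mp (hSsub hp.1)
        exact Nat.mem_primesBelow.mpr ⟨hp.2, this.2⟩
      · refine ⟨(S.filter (fun p => ¬ p < T)).card, ?_, ?_⟩
        · have hmul : (S.filter (fun p => ¬ p < T)).card * (T - 2) ≤ N := by
            calc (S.filter (fun p => ¬ p < T)).card * (T - 2)
                = (S.filter (fun p => ¬ p < T)).card • (T - 2) := (smul_eq_mul ..).symm
              _ ≤ ∑ p ∈ S.filter (fun p => ¬ p < T), (p - 2) := by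
                  apply Finset.card_nsmul_le_sum
                  intro p hp
                  simp only [Finset.mem_filter] at hp
                  omega
              _ ≤ ∑ p ∈ S, (p - 2) :=
                  Finset.sum_le_sum_of_subset (Finset.filter_subset _ _)
              _ ≤ N := hSsum
          have : (S.filter (fun p => ¬ p < T)).card ≤ k :=
            (Nat.le_div_iff_mul_le (by omega)).mpr hmul
          omega
        · exact Finset.mem_powersetCard.mpr ⟨(Finset.filter_subset _ _).trans hSsub, rfl⟩
    · intro a ha b hb hab
      simp only [Prod.mk.injEq] at hab
      rw [← Finset.filter_union_filter_not_eq (· < T) a,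
        ← Finset.filter_union_filter_not_eq (· < T) b, hab.1, hab.2]
  have hPcard : P.card ≤ N + 2 := by
    have : P ⊆ Finset.Ico 2 (N+3) := by
      intro p hp
      have := Nat.mem_primesBelow.mp hp
      exact Finset.mem_Ico.mpr ⟨this.2.two_le, this.1⟩
    calc P.card ≤ (Finset.Ico 2 (N+3)).card := Finset.card_le_card this
      _ = N + 1 := by simp
      _ ≤ N + 2 := by omega
  have htarget : target.card ≤ 2^(T/2+2) * ((k+1) * (N+2)^k) := by
    rw [Finset.card_product]
    apply Nat.mul_le_mul
    · rw [Finset.card_powerset]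
      exact Nat.pow_le_pow_right (by norm_num) (primesBelow_card_le T)
    · calc ((Finset.range (k+1)).biUnion fun j => Finset.powersetCard j P).card
          ≤ ∑ j ∈ Finset.range (k+1), (Finset.powersetCard j P).card :=
            Finset.card_biUnion_le
        _ ≤ ∑ j ∈ Finset.range (k+1), (N+2)^k := by
            apply Finset.sum_le_sum
            intro j hj
            rw [Finset.card_powersetCard]
            calc P.card.choose j ≤ P.card ^ j := Nat.choose_le_pow _ _
              _ ≤ (N+2) ^ j := Nat.pow_le_pow_left hPcard _
              _ ≤ (N+2) ^ k := Nat.pow_le_pow_right (by omega)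
                  (by simpa using Nat.lt_succ_iff.mp (Finset.mem_range.mp hj))
        _ = (k+1) * (N+2)^k := by rw [Finset.sum_const, Finset.card_range, smul_eq_mul]
  exact hcard.trans htarget


lemma expbound (N T k : ℕ) (hN : 38 ≤ N) (hT3 : 3 ≤ T)
    (hT : (T:ℝ) ≤ 2 * Real.sqrt (N * Real.log N) + 3)
    (hTL : 2 * Real.sqrt (N * Real.log N) ≤ (T:ℝ) - 2)
    (hk : k * (T-2) ≤ N) (hkN : k ≤ N) :
    ((2:ℝ)^(T/2+2) * (((k:ℕ):ℝ)+1) * (((N:ℝ)+2)^k)) ≤ Real.exp (3 * Real.sqrt (N * Real.log N)) := by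
  set l2 := Real.log 2 with hl2def
  have hl2a : 0.6931 ≤ l2 := by rw [hl2def]; linarith [Real.log_two_gt_d9]
  have hl2b : l2 ≤ 0.6932 := by rw [hl2def]; linarith [Real.log_two_lt_d9]
  set x := Real.log N with hxdef
  have hN0 : (0:ℝ) < N := by positivity
  have hN1 : (38:ℝ) ≤ (N:ℝ) := by exact_mod_cast hN
  have hx5 : 5 * l2 ≤ x := by
    have : Real.log 32 ≤ Real.log N := Real.log_le_log (by norm_num) (by exact_mod_cast by omega)
    have h32 : Real.log 32 = 5 * l2 := by
      rw [hl2def, show (32:ℝ) = 2^5 by norm_num, Real.log_pow]; push_cast; ring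
    linarith
  have hx0 : 0 < x := by linarith
  set s := Real.sqrt N with hsdef
  set t := Real.sqrt x with htdef
  have hs2 : s^2 = N := Real.sq_sqrt (le_of_lt hN0)
  have ht2 : t^2 = x := Real.sq_sqrt (le_of_lt hx0)
  have hs0 : 0 < s := Real.sqrt_pos.mpr hN0
  have ht0 : 0 < t := Real.sqrt_pos.mpr hx0
  have hs6 : 6 ≤ s := by
    rw [hsdef]
    rw [show (6:ℝ) = Real.sqrt 36 by rw [show (36:ℝ) = 6^2 by norm_num, Real.sqrt_sq]; norm_num]
    exact Real.sqrt_le_sqrt (by exact_mod_cast by omega)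
  have ht186 : 1.86 ≤ t := by nlinarith
  have hL : Real.sqrt (N * Real.log N) = s * t := Real.sqrt_mul hN0.le _
  have hxs : x ≤ 2 * s := by
    have hlog : Real.log s = x / 2 := by rw [hsdef, Real.log_sqrt (le_of_lt hN0)]
    have := Real.log_le_sub_one_of_pos hs0
    rw [hlog] at this; linarith
  -- cast facts about k and T
  have hkr : (k:ℝ) * ((T:ℝ) - 2) ≤ N := by
    have : ((k * (T-2) : ℕ) : ℝ) ≤ (N:ℝ) := by exact_mod_cast hk
    push_cast [Nat.cast_sub (by omega : 2 ≤ T)] at this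
    linarith
  have hk2L : (k:ℝ) * (2 * (s*t)) ≤ N := by
    calc (k:ℝ) * (2 * (s*t)) ≤ (k:ℝ) * ((T:ℝ) - 2) := by
          have := hTL; rw [hL] at this
          exact mul_le_mul_of_nonneg_left (by linarith) (Nat.cast_nonneg k)
      _ ≤ N := hkr
  have h2kt : 2 * (k:ℝ) * t ≤ s := by
    have h1 : 2 * (k:ℝ) * t * s ≤ s * s := by nlinarith
    nlinarith
  have ha : ((T/2+2 : ℕ) : ℝ) ≤ s*t + 3.5 := by
    have h1 : ((T/2 : ℕ) : ℝ) ≤ (T:ℝ)/2 := Nat.cast_div_le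
    have h2 : (T:ℝ) ≤ 2*(s*t) + 3 := by rw [hL] at hT; exact hT
    push_cast
    linarith
  have hlogk : Real.log (k+1) ≤ x + l2 := by
    calc Real.log (k+1) ≤ Real.log (2*N) := by
          apply Real.log_le_log (by positivity)
          have : (k:ℝ) ≤ N := by exact_mod_cast hkN
          linarith
      _ = l2 + x := by rw [Real.log_mul (by norm_num) (ne_of_gt hN0)]
    linarith
  have hlogN2 : Real.log ((N:ℝ)+2) ≤ x + l2 := by
    calc Real.log ((N:ℝ)+2) ≤ Real.log (2*N) := by
          apply Real.log_le_log (by positivity); linarith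
      _ = l2 + x := by rw [Real.log_mul (by norm_num) (ne_of_gt hN0)]
    linarith
  have hlogN2' : 0 ≤ Real.log ((N:ℝ)+2) := Real.log_nonneg (by linarith)
  have hk0 : (0:ℝ) ≤ k := Nat.cast_nonneg k
  have hkx : (k:ℝ) * x ≤ s*t/2 := by nlinarith
  have hkl2 : (k:ℝ) * l2 ≤ s*t/10 := by nlinarith
  have hklogN2 : (k:ℝ) * Real.log ((N:ℝ)+2) ≤ s*t/2 + s*t/10 := by
    have := mul_le_mul_of_nonneg_left hlogN2 hk0
    nlinarith
  have hfin : t^2 + 4.5*l2 ≤ s*t*(2.4 - l2) := by nlinarith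
  have hE : ((T/2+2 : ℕ):ℝ) * l2 + Real.log ((k:ℝ)+1) + (k:ℝ) * Real.log ((N:ℝ)+2)
      ≤ 3 * (s*t) := by
    have h1 : ((T/2+2 : ℕ):ℝ) * l2 ≤ (s*t + 3.5) * l2 :=
      mul_le_mul_of_nonneg_right ha (by linarith)
    nlinarith
  have e1 : (2:ℝ)^(T/2+2) = Real.exp (((T/2+2 : ℕ):ℝ) * l2) := by
    rw [Real.exp_nat_mul, Real.exp_log (by norm_num : (0:ℝ) < 2)]
  have e2 : ((k:ℝ)+1) = Real.exp (Real.log ((k:ℝ)+1)) := by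
    rw [Real.exp_log (by positivity)]
  have e3 : ((N:ℝ)+2)^k = Real.exp ((k:ℝ) * Real.log ((N:ℝ)+2)) := by
    rw [Real.exp_nat_mul, Real.exp_log (by positivity)]
  calc (2:ℝ)^(T/2+2) * (((k:ℕ):ℝ)+1) * (((N:ℝ)+2)^k)
      = Real.exp (((T/2+2 : ℕ):ℝ) * l2 + Real.log ((k:ℝ)+1) + (k:ℝ) * Real.log ((N:ℝ)+2)) := by
        rw [Real.exp_add, Real.exp_add, ← e1, ← e2, ← e3]
    _ ≤ Real.exp (3 * (s*t)) := Real.exp_le_exp.mpr hE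
    _ = Real.exp (3 * Real.sqrt (N * Real.log N)) := by rw [hL]


lemma trivbound (N : ℕ) (h2 : 2 ≤ N) (h37 : N ≤ 37) :
    (2:ℝ)^((N+3)/2+2) ≤ Real.exp (3 * Real.sqrt (N * Real.log N)) := by
  set l2 := Real.log 2 with hl2def
  have hl2a : 0.6931 ≤ l2 := by rw [hl2def]; linarith [Real.log_two_gt_d9]
  have hl2b : l2 ≤ 0.6932 := by rw [hl2def]; linarith [Real.log_two_lt_d9]
  set x := Real.log N with hxdef
  have hN0 : (0:ℝ) < N := by positivity
  have hNr2 : (2:ℝ) ≤ N := by exact_mod_cast h2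
  have hNr37 : (N:ℝ) ≤ 37 := by exact_mod_cast h37
  have hxl2 : l2 ≤ x := Real.log_le_log (by norm_num) (by exact_mod_cast h2)
  have hx0 : 0 < x := by linarith
  have ha : (((N+3)/2+2 : ℕ) : ℝ) ≤ ((N:ℝ)+7)/2 := by
    have h1 : (((N+3)/2 : ℕ) : ℝ) ≤ ((N:ℝ)+3)/2 := by
      have := Nat.cast_div_le (α := ℝ) (m := N+3) (n := 2)
      push_cast at this ⊢; linarith
    push_cast
    linarith
  have hsq : ((((N+3)/2+2 : ℕ):ℝ) * l2)^2 ≤ 9 * (N * x) := by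
    have h1 : ((((N+3)/2+2 : ℕ):ℝ) * l2)^2 ≤ (((N:ℝ)+7)/2 * l2)^2 := by
      apply pow_le_pow_left₀ (by positivity)
      exact mul_le_mul_of_nonneg_right ha (by linarith)
    rcases le_or_gt N 7 with h7 | h7
    · have hNr7 : (N:ℝ) ≤ 7 := by exact_mod_cast h7
      have q1 : ((N:ℝ)+7)^2 * l2 ≤ 36*N := by
        nlinarith [mul_nonneg (sub_nonneg.mpr hNr2) (sub_nonneg.mpr hNr7),
          mul_le_mul_of_nonneg_left hl2b (by positivity : (0:ℝ) ≤ ((N:ℝ)+7)^2)]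
      have q1' : ((N:ℝ)+7)^2 * l2^2 ≤ 36*N*l2 := by
        have := mul_le_mul_of_nonneg_right q1 (by linarith : (0:ℝ) ≤ l2)
        nlinarith
      nlinarith [mul_le_mul_of_nonneg_left hxl2 (by positivity : (0:ℝ) ≤ 9*(N:ℝ))]
    · have h8 : (8:ℕ) ≤ N := h7
      have hx3 : 3 * l2 ≤ x := by
        have : Real.log 8 ≤ Real.log N := Real.log_le_log (by norm_num) (by exact_mod_cast h8)
        have h8' : Real.log 8 = 3 * l2 := by
          rw [hl2def, show (8:ℝ) = 2^3 by norm_num, Real.log_pow]; push_cast; ring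
        linarith
      have hNr8 : (8:ℝ) ≤ N := by exact_mod_cast h8
      have q1 : ((N:ℝ)+7)^2 * l2 ≤ 108*N := by
        nlinarith [mul_nonneg (sub_nonneg.mpr hNr8) (sub_nonneg.mpr hNr37),
          mul_le_mul_of_nonneg_left hl2b (by positivity : (0:ℝ) ≤ ((N:ℝ)+7)^2)]
      have q1' : ((N:ℝ)+7)^2 * l2^2 ≤ 108*N*l2 := by
        have := mul_le_mul_of_nonneg_right q1 (by linarith : (0:ℝ) ≤ l2)
        nlinarith
      nlinarith [mul_le_mul_of_nonneg_left hx3 (by positivity : (0:ℝ) ≤ 9*(N:ℝ))]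
  have key : (((N+3)/2+2 : ℕ):ℝ) * l2 ≤ 3 * Real.sqrt (N * x) := by
    have h3 : (((N+3)/2+2 : ℕ):ℝ) * l2 / 3 ≤ Real.sqrt (N * x) := by
      rw [Real.le_sqrt (by positivity) (by positivity)]
      nlinarith
    linarith
  calc (2:ℝ)^((N+3)/2+2) = Real.exp ((((N+3)/2+2 : ℕ):ℝ) * l2) := by
        rw [Real.exp_nat_mul, Real.exp_log (by norm_num : (0:ℝ) < 2)]
    _ ≤ Real.exp (3 * Real.sqrt (N * x)) := Real.exp_le_exp.mpr key

/-- The number of squarefree positive integers `m` with `Ψ(m) ≤ N` is at most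
`exp(3 √(N log N))`. -/
theorem card_QN_le (N : ℕ) (hN : 1 ≤ N) :
    ({m : ℕ | 1 ≤ m ∧ Squarefree m ∧ Psi m ≤ N}.ncard : ℝ)
      ≤ Real.exp (3 * Real.sqrt (N * Real.log N)) := by
  classical
  rcases eq_or_lt_of_le hN with h1 | h2
  · -- N = 1 : the set is empty
    have hempty : {m : ℕ | 1 ≤ m ∧ Squarefree m ∧ Psi m ≤ N} = ∅ := by
      ext m
      simp only [Set.mem_setOf_eq, Set.mem_empty_iff_false, iff_false]
      rintro ⟨-, -, hle⟩
      have : 2 ≤ Psi m := Nat.le_add_right 2 _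
      omega
    rw [hempty]
    simp only [Set.ncard_empty, Nat.cast_zero]
    positivity
  · have hN2 : 2 ≤ N := h2
    have hA := stepA N hN
    rcases le_or_gt N 37 with h37 | h38
    · -- small N : trivial bound
      have hcard : (((N+3).primesBelow.powerset.filter (fun S => ∑ p ∈ S, (p-2) ≤ N)).card
          ≤ 2^((N+3)/2+2)) := by
        calc (((N+3).primesBelow.powerset.filter (fun S => ∑ p ∈ S, (p-2) ≤ N)).card)
            ≤ (N+3).primesBelow.powerset.card := Finset.card_le_card (Finset.filter_subset _ _)
          _ = 2^((N+3).primesBelow.card) := Finset.card_powerset _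
          _ ≤ 2^((N+3)/2+2) := Nat.pow_le_pow_right (by norm_num) (primesBelow_card_le (N+3))
      calc ({m : ℕ | 1 ≤ m ∧ Squarefree m ∧ Psi m ≤ N}.ncard : ℝ)
          ≤ ((2^((N+3)/2+2) : ℕ) : ℝ) := by exact_mod_cast hA.trans hcard
        _ = (2:ℝ)^((N+3)/2+2) := by push_cast; ring
        _ ≤ Real.exp (3 * Real.sqrt (N * Real.log N)) := trivbound N hN2 h37
    · -- large N : split bound
      have hN38 : 38 ≤ N := h38
      set L := Real.sqrt (N * Real.log N) with hLdef
      have hL0 : 0 ≤ L := Real.sqrt_nonneg _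
      set T := ⌊2*L⌋₊ + 3 with hTdef
      set k := N / (T - 2) with hkdef
      have hT3 : 3 ≤ T := by omega
      have hB := stepB N T hT3
      have hT : (T:ℝ) ≤ 2*L + 3 := by
        rw [hTdef]
        push_cast
        have := Nat.floor_le (by positivity : (0:ℝ) ≤ 2*L)
        linarith
      have hTL : 2*L ≤ (T:ℝ) - 2 := by
        have h := Nat.lt_floor_add_one (2*L)
        rw [hTdef]
        push_cast
        linarith
      have hkm : k * (T-2) ≤ N := Nat.div_mul_le_self N (T-2)
      have hkN : k ≤ N := Nat.div_le_self N (T-2)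
      have hexp := expbound N T k hN38 hT3 hT hTL hkm hkN
      calc ({m : ℕ | 1 ≤ m ∧ Squarefree m ∧ Psi m ≤ N}.ncard : ℝ)
          ≤ ((2^(T/2+2) * ((k+1) * (N+2)^k) : ℕ) : ℝ) := by exact_mod_cast hA.trans hB
        _ = (2:ℝ)^(T/2+2) * (((k:ℕ):ℝ)+1) * (((N:ℝ)+2)^k) := by push_cast; ring
        _ ≤ Real.exp (3 * L) := hexp
end

section
/- Let n ≥ 1 and N ≥ 1, and let Q_{n,N} be the set of points ω ∈ (ℂ*)^n, all of whose coordinates are roots of unity, such that the order of ω is squarefree and satisfies Ψ(ord(ω)) ≤ N. Then #Q_{n,N} ≤ exp(3 (n + 1) √(N log N)). -/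
private lemma helper_pow (N m j : ℕ) (hm : (m : ℝ) ≤ 2 ^ j)
    (h : ((j : ℝ) * Real.log 2) ^ 2 ≤ 9 * ((N : ℝ) * Real.log N))
    (h9 : (0:ℝ) ≤ (N : ℝ) * Real.log N) :
    (m : ℝ) ≤ Real.exp (3 * Real.sqrt ((N : ℝ) * Real.log N)) := by
  have hj : (0:ℝ) ≤ (j : ℝ) * Real.log 2 := by
    have := Real.log_nonneg (by norm_num : (1:ℝ) ≤ 2)
    positivity
  have h1 : (j : ℝ) * Real.log 2 ≤ 3 * Real.sqrt ((N : ℝ) * Real.log N) := by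
    have h2 : (j : ℝ) * Real.log 2 / 3 ≤ Real.sqrt ((N : ℝ) * Real.log N) := by
      rw [Real.le_sqrt (by positivity) h9]
      nlinarith
    linarith
  calc (m : ℝ) ≤ 2 ^ j := hm
    _ = Real.exp ((j : ℝ) * Real.log 2) := by
        rw [Real.exp_nat_mul, Real.exp_log two_pos]
    _ ≤ _ := Real.exp_le_exp.mpr h1

set_option maxHeartbeats 1600000 in
private lemma key (N m : ℕ) (hN : 2 ≤ N) (hsf : Squarefree m) (hΨ : Psi m ≤ N) :
    (m : ℝ) ≤ Real.exp (3 * Real.sqrt ((N : ℝ) * Real.log N)) := by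
  have hl2pos : (0:ℝ) < Real.log 2 := Real.log_pos (by norm_num)
  have hl2a := Real.log_two_gt_d9
  have hl2b := Real.log_two_lt_d9
  have hNR : (2:ℝ) ≤ (N:ℝ) := by exact_mod_cast hN
  have hlogN2 : Real.log 2 ≤ Real.log N := Real.log_le_log (by norm_num) hNR
  have h9 : (0:ℝ) ≤ (N : ℝ) * Real.log N := by positivity
  set P := m.primeFactors with hPdef
  have hprod : ∏ p ∈ P, p = m := Nat.prod_primeFactors_of_squarefree hsf
  have hsum : ∑ p ∈ P, (p - 2) ≤ N - 2 := by
    rw [hPdef]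
    unfold Psi at hΨ; omega
  have hple : ∀ p ∈ P, p.Prime ∧ p ≤ N := by
    intro p hp
    have hpr := Nat.prime_of_mem_primeFactors hp
    have h2 := hpr.two_le
    have hs : p - 2 ≤ ∑ q ∈ P, (q - 2) :=
      Finset.single_le_sum (f := fun q => q - 2) (fun _ _ => Nat.zero_le _) hp
    exact ⟨hpr, by omega⟩
  by_cases h13 : N ≤ 12
  · -- small case : all prime factors are at most 12
    have hsub : P ⊆ Finset.filter Nat.Prime (Finset.range 13) := by
      intro p hp
      obtain ⟨h1, h2⟩ := hple p hp
      exact Finset.mem_filter.mpr ⟨Finset.mem_range.mpr (by omega), h1⟩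
    have hm2310 : m ≤ 2310 := by
      calc m = ∏ p ∈ P, p := hprod.symm
        _ ≤ ∏ p ∈ Finset.filter Nat.Prime (Finset.range 13), p :=
            Finset.prod_le_prod_of_subset_of_one_le' hsub
              (fun i hi _ => (Finset.mem_filter.mp hi).2.one_lt.le)
        _ = 2310 := by decide
    by_cases h3 : N ≤ 3
    · -- m ≤ 6 ≤ 2^3
      have hsub' : P ⊆ Finset.filter Nat.Prime (Finset.range 4) := by
        intro p hp
        obtain ⟨h1, h2⟩ := hple p hp
        exact Finset.mem_filter.mpr ⟨Finset.mem_range.mpr (by omega), h1⟩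
      have hm6 : m ≤ 6 := by
        calc m = ∏ p ∈ P, p := hprod.symm
          _ ≤ ∏ p ∈ Finset.filter Nat.Prime (Finset.range 4), p :=
              Finset.prod_le_prod_of_subset_of_one_le' hsub'
                (fun i hi _ => (Finset.mem_filter.mp hi).2.one_lt.le)
          _ = 6 := by decide
      refine helper_pow N m 3 ?_ ?_ h9
      · have : (m:ℝ) ≤ 6 := by exact_mod_cast hm6
        linarith [this]
      · push_cast
        nlinarith
    · by_cases h9' : N ≤ 9
      · -- m ≤ 210 ≤ 2^8
        have hsub' : P ⊆ Finset.filter Nat.Prime (Finset.range 10) := by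
          intro p hp
          obtain ⟨h1, h2⟩ := hple p hp
          exact Finset.mem_filter.mpr ⟨Finset.mem_range.mpr (by omega), h1⟩
        have hm210 : m ≤ 210 := by
          calc m = ∏ p ∈ P, p := hprod.symm
            _ ≤ ∏ p ∈ Finset.filter Nat.Prime (Finset.range 10), p :=
                Finset.prod_le_prod_of_subset_of_one_le' hsub'
                  (fun i hi _ => (Finset.mem_filter.mp hi).2.one_lt.le)
            _ = 210 := by decide
        have hN4 : (4:ℝ) ≤ (N:ℝ) := by
          have : (4:ℕ) ≤ N := by omega
          exact_mod_cast this
        have hlogN4 : 2 * Real.log 2 ≤ Real.log N := by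
          have h4 : Real.log 4 ≤ Real.log N := Real.log_le_log (by norm_num) hN4
          have : Real.log 4 = 2 * Real.log 2 := by
            rw [show (4:ℝ) = 2 ^ (2:ℕ) by norm_num, Real.log_pow]; push_cast; ring
          linarith
        refine helper_pow N m 8 ?_ ?_ h9
        · have : (m:ℝ) ≤ 210 := by exact_mod_cast hm210
          linarith [this]
        · push_cast
          nlinarith
      · -- 10 ≤ N ≤ 12, m ≤ 2310 ≤ 2^12
        have hN10 : (10:ℝ) ≤ (N:ℝ) := by
          have : (10:ℕ) ≤ N := by omega
          exact_mod_cast this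
        have hlogN8 : 3 * Real.log 2 ≤ Real.log N := by
          have h4 : Real.log 8 ≤ Real.log N := Real.log_le_log (by norm_num) (by linarith)
          have : Real.log 8 = 3 * Real.log 2 := by
            rw [show (8:ℝ) = 2 ^ (3:ℕ) by norm_num, Real.log_pow]; push_cast; ring
          linarith
        refine helper_pow N m 12 ?_ ?_ h9
        · have : (m:ℝ) ≤ 2310 := by exact_mod_cast hm2310
          linarith [this]
        · push_cast
          nlinarith
  · -- big case : N ≥ 13
    push_neg at h13
    have hN13 : 13 ≤ N := h13
    have hNR13 : (13:ℝ) ≤ (N:ℝ) := by exact_mod_cast hN13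
    have hlogN : 3 * Real.log 2 ≤ Real.log N := by
      have h4 : Real.log 8 ≤ Real.log N := Real.log_le_log (by norm_num) (by linarith)
      have : Real.log 8 = 3 * Real.log 2 := by
        rw [show (8:ℝ) = 2 ^ (3:ℕ) by norm_num, Real.log_pow]; push_cast; ring
      linarith
    have hlogNpos : 0 < Real.log N := by linarith
    have hNlogN : (0:ℝ) < (N:ℝ) * Real.log N := by positivity
    set L := Real.sqrt ((N:ℝ) * Real.log N) with hLdef
    have hLpos : 0 < L := Real.sqrt_pos.mpr hNlogN
    have hL2 : L ^ 2 = (N:ℝ) * Real.log N := Real.sq_sqrt hNlogN.le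
    set T : ℕ := ⌊L⌋₊ + 2 with hTdef
    set Ps := P.filter (fun p => p ≤ T) with hPs
    set Pl := P.filter (fun p => ¬ p ≤ T) with hPl
    set k := Pl.card with hk
    have hsplit : m = (∏ p ∈ Ps, p) * (∏ p ∈ Pl, p) := by
      rw [← hprod, hPs, hPl, Finset.prod_filter_mul_prod_filter_not]
    have h1 : ∏ p ∈ Ps, p ≤ 4 ^ T := by
      calc ∏ p ∈ Ps, p ≤ ∏ p ∈ Finset.filter Nat.Prime (Finset.range (T+1)), p := by
            apply Finset.prod_le_prod_of_subset_of_one_le'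
            · intro p hp
              rw [hPs, Finset.mem_filter] at hp
              exact Finset.mem_filter.mpr
                ⟨Finset.mem_range.mpr (by omega), (hple p hp.1).1⟩
            · intro i hi _
              exact (Finset.mem_filter.mp hi).2.one_lt.le
        _ ≤ 4 ^ T := primorial_le_4_pow T
    have h2 : ∏ p ∈ Pl, p ≤ N ^ k :=
      Finset.prod_le_pow_card _ _ _
        (fun p hp => (hple p (Finset.filter_subset _ _ hp)).2)
    have h3 : k * (⌊L⌋₊ + 1) ≤ N := by
      have hlow : ∀ p ∈ Pl, ⌊L⌋₊ + 1 ≤ p - 2 := by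
        intro p hp
        rw [hPl, Finset.mem_filter] at hp
        have := (hple p hp.1).1.two_le
        omega
      calc k * (⌊L⌋₊ + 1) = Pl.card • (⌊L⌋₊ + 1) := by rw [smul_eq_mul]
        _ ≤ ∑ p ∈ Pl, (p - 2) := Finset.card_nsmul_le_sum _ _ _ hlow
        _ ≤ ∑ p ∈ P, (p - 2) := Finset.sum_le_sum_of_subset (Finset.filter_subset _ _)
        _ ≤ N - 2 := hsum
        _ ≤ N := by omega
    have hm4 : (m:ℝ) ≤ 4 ^ T * (N:ℝ) ^ k := by
      have := hsplit
      have c1 : ((∏ p ∈ Ps, p : ℕ) : ℝ) ≤ (4:ℝ) ^ T := by exact_mod_cast h1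
      have c2 : ((∏ p ∈ Pl, p : ℕ) : ℝ) ≤ (N:ℝ) ^ k := by exact_mod_cast h2
      calc (m:ℝ) = ((∏ p ∈ Ps, p : ℕ) : ℝ) * ((∏ p ∈ Pl, p : ℕ) : ℝ) := by
            rw [← Nat.cast_mul, ← hsplit]
        _ ≤ 4 ^ T * (N:ℝ) ^ k := by
            apply mul_le_mul c1 c2 (by positivity) (by positivity)
    have hexp : (4:ℝ) ^ T * (N:ℝ) ^ k
        = Real.exp ((T:ℝ) * (2 * Real.log 2) + (k:ℝ) * Real.log N) := by
      rw [Real.exp_add, Real.exp_nat_mul, Real.exp_nat_mul,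
        Real.exp_log (by positivity : (0:ℝ) < (N:ℝ))]
      congr 1
      rw [show (2:ℝ) * Real.log 2 = Real.log 4 by
        rw [show (4:ℝ) = 2 ^ (2:ℕ) by norm_num, Real.log_pow]; push_cast; ring]
      rw [Real.exp_log (by norm_num)]
    have hTle : (T:ℝ) ≤ L + 2 := by
      have hfl : ((⌊L⌋₊ : ℕ) : ℝ) ≤ L := Nat.floor_le hLpos.le
      rw [hTdef]
      push_cast
      linarith
    have hkL : (k:ℝ) * L ≤ (N:ℝ) := by
      have h3' : (k:ℝ) * ((⌊L⌋₊:ℝ) + 1) ≤ (N:ℝ) := by exact_mod_cast h3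
      have hfl : L ≤ (⌊L⌋₊:ℝ) + 1 := (Nat.lt_floor_add_one L).le
      have hk0 : (0:ℝ) ≤ (k:ℝ) := Nat.cast_nonneg k
      nlinarith
    have hklogN : (k:ℝ) * Real.log N ≤ L := by
      have hmul : (k:ℝ) * Real.log N * L ≤ L * L := by
        calc (k:ℝ) * Real.log N * L = ((k:ℝ) * L) * Real.log N := by ring
          _ ≤ (N:ℝ) * Real.log N := by nlinarith
          _ = L * L := by rw [← hL2]; ring
      exact le_of_mul_le_mul_right hmul hLpos
    have hfinal : (T:ℝ) * (2 * Real.log 2) + (k:ℝ) * Real.log N ≤ 3 * L := by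
      set l := Real.log 2 with hldef
      have hL39 : 39 * l ≤ L ^ 2 := by
        rw [hL2]
        calc 39 * l = 13 * (3 * l) := by ring
          _ ≤ (N:ℝ) * Real.log N :=
            mul_le_mul hNR13 hlogN (by positivity) (by linarith)
      have ha : (0:ℝ) < 1 - l := by linarith [hl2b]
      have h2l : (0:ℝ) ≤ 2 * l := by linarith
      have hL1l : (0:ℝ) ≤ L * (1 - l) := by positivity
      have hsq : (2 * l) ^ 2 ≤ (L * (1 - l)) ^ 2 := by
        have hmul : 39 * l * (1 - l) ^ 2 ≤ L ^ 2 * (1 - l) ^ 2 :=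
          mul_le_mul_of_nonneg_right hL39 (sq_nonneg _)
        nlinarith [hl2a, hl2b, hl2pos]
      have hkey : 2 * l ≤ L * (1 - l) := by
        calc 2 * l = Real.sqrt ((2 * l) ^ 2) := (Real.sqrt_sq h2l).symm
          _ ≤ Real.sqrt ((L * (1 - l)) ^ 2) := Real.sqrt_le_sqrt hsq
          _ = L * (1 - l) := Real.sqrt_sq hL1l
      have hstep1 : (T:ℝ) * (2 * l) ≤ (L + 2) * (2 * l) :=
        mul_le_mul_of_nonneg_right hTle h2l
      nlinarith [hstep1, hklogN, hkey]
    calc (m:ℝ) ≤ 4 ^ T * (N:ℝ) ^ k := hm4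
      _ = Real.exp ((T:ℝ) * (2 * Real.log 2) + (k:ℝ) * Real.log N) := hexp
      _ ≤ Real.exp (3 * L) := Real.exp_le_exp.mpr hfinal

/-- The number of torsion points `ω ∈ (ℂ*)ⁿ` whose order is squarefree and
satisfies `Ψ(ord(ω)) ≤ N` is at most `exp(3 (n+1) √(N log N))`. -/
theorem card_QnN_le (n N : ℕ) (hn : 1 ≤ n) (hN : 1 ≤ N) :
    ({ω : Fin n → ℂ | IsOfFinOrder ω ∧ Squarefree (orderOf ω) ∧
        Psi (orderOf ω) ≤ N}.ncard : ℝ)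
      ≤ Real.exp (3 * (n + 1) * Real.sqrt (N * Real.log N)) := by
  set S := {ω : Fin n → ℂ | IsOfFinOrder ω ∧ Squarefree (orderOf ω) ∧
      Psi (orderOf ω) ≤ N} with hSdef
  by_cases hN1 : N = 1
  · have hSempty : S = ∅ := by
      rw [hSdef]
      rw [Set.eq_empty_iff_forall_notMem]
      rintro ω ⟨-, -, hΨ⟩
      rw [hN1] at hΨ
      unfold Psi at hΨ
      omega
    rw [hSempty]
    simp only [Set.ncard_empty, Nat.cast_zero]
    positivity
  · have hN2 : 2 ≤ N := by omega
    have hNR1 : (1:ℝ) ≤ (N:ℝ) := by exact_mod_cast hN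
    have hlogN0 : 0 ≤ Real.log N := Real.log_nonneg hNR1
    set E := Real.exp (3 * Real.sqrt ((N:ℝ) * Real.log N)) with hEdef
    have hE0 : (0:ℝ) < E := Real.exp_pos _
    have hE1 : (1:ℝ) ≤ E := Real.one_le_exp (by positivity)
    set F : Finset (Fin n → ℂ) := (Finset.Icc 1 ⌊E⌋₊).biUnion
      (fun m => Fintype.piFinset
        (fun _ : Fin n => (Polynomial.nthRoots m (1:ℂ)).toFinset)) with hFdef
    have hSF : S ⊆ ↑F := by
      intro ω hω
      obtain ⟨hfin, hsf, hΨ⟩ := hω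
      have hd1 : 1 ≤ orderOf ω := hfin.orderOf_pos
      have hdE : ((orderOf ω : ℕ) : ℝ) ≤ E := key N (orderOf ω) hN2 hsf hΨ
      have hdE' : orderOf ω ≤ ⌊E⌋₊ := Nat.le_floor hdE
      refine Finset.mem_coe.mpr (Finset.mem_biUnion.mpr
        ⟨orderOf ω, Finset.mem_Icc.mpr ⟨hd1, hdE'⟩, ?_⟩)
      rw [Fintype.mem_piFinset]
      intro i
      rw [Multiset.mem_toFinset, Polynomial.mem_nthRoots hd1]
      have hone := pow_orderOf_eq_one ω
      calc ω i ^ orderOf ω = (ω ^ orderOf ω) i := rfl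
        _ = 1 := by rw [hone]; rfl
    have hcard : S.ncard ≤ F.card := by
      have := Set.ncard_le_ncard hSF F.finite_toSet
      simpa [Set.ncard_coe_finset] using this
    have hFcard : (F.card : ℝ) ≤ E ^ (n + 1) := by
      have h1 : F.card ≤ ∑ m ∈ Finset.Icc 1 ⌊E⌋₊,
          (Fintype.piFinset
            (fun _ : Fin n => (Polynomial.nthRoots m (1:ℂ)).toFinset)).card :=
        Finset.card_biUnion_le
      have h2 : ∀ m ∈ Finset.Icc 1 ⌊E⌋₊,
          ((Fintype.piFinset
            (fun _ : Fin n => (Polynomial.nthRoots m (1:ℂ)).toFinset)).card : ℝ)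
            ≤ E ^ n := by
        intro m hm
        have hmE : (m:ℝ) ≤ E := by
          have h := (Finset.mem_Icc.mp hm).2
          calc (m:ℝ) ≤ (⌊E⌋₊ : ℝ) := by exact_mod_cast h
            _ ≤ E := Nat.floor_le hE0.le
        have hcm : ((Polynomial.nthRoots m (1:ℂ)).toFinset).card ≤ m :=
          (Multiset.toFinset_card_le _).trans (Polynomial.card_nthRoots m 1)
        rw [Fintype.card_piFinset]
        calc ((∏ _i : Fin n, ((Polynomial.nthRoots m (1:ℂ)).toFinset).card : ℕ) : ℝ)
            = ((((Polynomial.nthRoots m (1:ℂ)).toFinset).card : ℕ) : ℝ) ^ n := by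
              rw [Finset.prod_const, Finset.card_univ, Fintype.card_fin]
              push_cast; ring
          _ ≤ (m:ℝ) ^ n := by
              apply pow_le_pow_left₀ (by positivity)
              exact_mod_cast hcm
          _ ≤ E ^ n := pow_le_pow_left₀ (by positivity) hmE n
      calc (F.card : ℝ) ≤ ∑ m ∈ Finset.Icc 1 ⌊E⌋₊,
            ((Fintype.piFinset
              (fun _ : Fin n => (Polynomial.nthRoots m (1:ℂ)).toFinset)).card : ℝ) := by
            exact_mod_cast h1
        _ ≤ ∑ _m ∈ Finset.Icc 1 ⌊E⌋₊, E ^ n := Finset.sum_le_sum h2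
        _ = ((Finset.Icc 1 ⌊E⌋₊).card : ℝ) * E ^ n := by
            rw [Finset.sum_const, nsmul_eq_mul]
        _ ≤ E * E ^ n := by
            apply mul_le_mul_of_nonneg_right _ (by positivity)
            rw [Nat.card_Icc]
            calc ((⌊E⌋₊ + 1 - 1 : ℕ) : ℝ) = (⌊E⌋₊ : ℝ) := by norm_num
              _ ≤ E := Nat.floor_le hE0.le
        _ = E ^ (n + 1) := by ring
    have hEpow : E ^ (n + 1) = Real.exp (3 * ((n:ℝ) + 1) * Real.sqrt ((N:ℝ) * Real.log N)) := by
      rw [hEdef, ← Real.exp_nat_mul]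
      congr 1
      push_cast
      ring
    calc (S.ncard : ℝ) ≤ (F.card : ℝ) := by exact_mod_cast hcard
      _ ≤ E ^ (n + 1) := hFcard
      _ = _ := by rw [hEpow]
end

section
/- Let N ≥ 2 and let m be a squarefree positive integer with Ψ(m) ≤ N. Then the sum of the distinct prime factors of m is at most N + 2√(N − 2). -/
lemma sum_range_two_mul_add_one (k : ℕ) : ∑ i ∈ Finset.range k, (2 * i + 1) = k ^ 2 := by
  induction k with
  | zero => simp
  | succ n ih => rw [Finset.sum_range_succ, ih]; ring

lemma odd_finset_sum (S : Finset ℕ) (hS : ∀ x ∈ S, Odd x) :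
    S.card ^ 2 ≤ ∑ x ∈ S, x := by
  set k := S.card with hk
  have e := S.orderIsoOfFin hk.symm
  have key : ∀ n (hn : n < k), 2 * n + 1 ≤ (e ⟨n, hn⟩ : ℕ) := by
    intro n
    induction n with
    | zero =>
      intro hn
      have := hS _ (e ⟨0, hn⟩).2
      rcases this with ⟨u, hu⟩
      omega
    | succ n ih =>
      intro hn
      have h1 := ih (Nat.lt_of_succ_lt hn)
      have hlt : (e ⟨n, Nat.lt_of_succ_lt hn⟩ : ℕ) < (e ⟨n + 1, hn⟩ : ℕ) := by
        have := e.strictMono (show (⟨n, Nat.lt_of_succ_lt hn⟩ : Fin k) < ⟨n + 1, hn⟩ from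
          Fin.mk_lt_mk.2 (Nat.lt_succ_self n))
        exact this
      rcases hS _ (e ⟨n, Nat.lt_of_succ_lt hn⟩).2 with ⟨u, hu⟩
      rcases hS _ (e ⟨n + 1, hn⟩).2 with ⟨v, hv⟩
      omega
  have hsum : ∑ x ∈ S, x = ∑ i : Fin k, (e i : ℕ) := by
    rw [← Finset.sum_attach S (fun x => x)]
    exact (Equiv.sum_comp e.toEquiv (fun x => (x : ℕ))).symm
  rw [hsum]
  calc (k : ℕ) ^ 2 = ∑ i ∈ Finset.range k, (2 * i + 1) := (sum_range_two_mul_add_one k).symm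
    _ = ∑ i : Fin k, (2 * i.1 + 1) := (Fin.sum_univ_eq_sum_range _ _).symm
    _ ≤ ∑ i : Fin k, (e i : ℕ) := Finset.sum_le_sum fun i _ => key i.1 i.2

/-- If `m` is a squarefree positive integer with `Ψ(m) ≤ N`, then the sum of the
distinct prime factors of `m` is at most `N + 2√(N − 2)`. -/
theorem sum_primeFactors_le (N m : ℕ) (hN : 2 ≤ N) (hm : 0 < m)
    (hsf : Squarefree m) (hpsi : Psi m ≤ N) :
    (∑ p ∈ m.primeFactors, (p : ℝ)) ≤ N + 2 * Real.sqrt ((N : ℝ) - 2) := by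
  set F := m.primeFactors with hF
  set k := F.card with hk
  -- sum (p-2) bound
  have hS : ∑ p ∈ F, (p - 2) ≤ N - 2 := by
    have : Psi m = 2 + ∑ p ∈ F, (p - 2) := rfl
    omega
  -- (k-1)^2 ≤ ∑ (p-2)
  have hkey : (k - 1) ^ 2 ≤ ∑ p ∈ F, (p - 2) := by
    set O := F.filter (fun p => p ≠ 2) with hO
    set T := O.image (fun p => p - 2) with hT
    have hinj : ∀ x ∈ O, ∀ y ∈ O, x - 2 = y - 2 → x = y := by
      intro x hx y hy hxy
      have hxp : x.Prime := Nat.prime_of_mem_primeFactors (Finset.mem_filter.1 hx).1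
      have hyp : y.Prime := Nat.prime_of_mem_primeFactors (Finset.mem_filter.1 hy).1
      have := hxp.two_le; have := hyp.two_le
      omega
    have hcardT : T.card = O.card := Finset.card_image_of_injOn hinj
    have hcardO : k - 1 ≤ O.card := by
      have : F.card ≤ O.card + 1 := by
        rw [hO]
        have := Finset.card_filter_add_card_filter_not (s := F)
          (p := fun p => p ≠ 2)
        have h2 : (F.filter (fun p => ¬ p ≠ 2)).card ≤ 1 := by
          apply Finset.card_le_one.2
          intro a ha b hb
          have := (Finset.mem_filter.1 ha).2
          have := (Finset.mem_filter.1 hb).2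
          omega
        omega
      omega
    have hodd : ∀ x ∈ T, Odd x := by
      intro x hx
      rcases Finset.mem_image.1 hx with ⟨p, hp, rfl⟩
      have hpp : p.Prime := Nat.prime_of_mem_primeFactors (Finset.mem_filter.1 hp).1
      have hne : p ≠ 2 := (Finset.mem_filter.1 hp).2
      have hoddp : Odd p := hpp.odd_of_ne_two hne
      rcases hoddp with ⟨u, hu⟩
      have := hpp.two_le
      exact ⟨u - 1, by omega⟩
    have h1 : T.card ^ 2 ≤ ∑ x ∈ T, x := odd_finset_sum T hodd
    have h2 : ∑ x ∈ T, x = ∑ p ∈ O, (p - 2) := Finset.sum_image hinj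
    have h3 : ∑ p ∈ O, (p - 2) ≤ ∑ p ∈ F, (p - 2) :=
      Finset.sum_le_sum_of_subset (Finset.filter_subset _ _)
    have h4 : (k - 1) ^ 2 ≤ T.card ^ 2 := Nat.pow_le_pow_left (by omega) 2
    omega
  -- sum p = sum (p-2) + 2k
  have hsum : ∑ p ∈ F, p = (∑ p ∈ F, (p - 2)) + 2 * k := by
    rw [Finset.sum_congr rfl (fun p hp => show p = (p - 2) + 2 from by
      have := (Nat.prime_of_mem_primeFactors hp).two_le; omega)]
    rw [Finset.sum_add_distrib, Finset.sum_const, smul_eq_mul]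
    ring
  have hsqrt : ((k : ℝ) - 1) ≤ Real.sqrt ((N : ℝ) - 2) := by
    have h1 : ((k - 1 : ℕ) : ℝ) ≤ Real.sqrt ((N : ℝ) - 2) := by
      rw [show ((N : ℝ) - 2) = ((N - 2 : ℕ) : ℝ) from by rw [Nat.cast_sub hN]; norm_num]
      rw [Real.le_sqrt (Nat.cast_nonneg _) (Nat.cast_nonneg _)]
      have : ((k-1)^2 : ℕ) ≤ (N - 2 : ℕ) := le_trans hkey (le_trans hS (le_refl _))
      exact_mod_cast this
    have : (k : ℝ) - 1 ≤ ((k - 1 : ℕ) : ℝ) := by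
      rcases Nat.eq_zero_or_pos k with h | h
      · simp [h]
      · rw [Nat.cast_sub h]; simp
    linarith
  have hfin : ((∑ p ∈ F, p : ℕ) : ℝ) ≤ (N : ℝ) + 2 * Real.sqrt ((N : ℝ) - 2) := by
    have hcast : ((∑ p ∈ F, p : ℕ) : ℝ) = ((∑ p ∈ F, (p - 2) : ℕ) : ℝ) + 2 * k := by
      rw [hsum]; push_cast; ring
    have hSr : ((∑ p ∈ F, (p - 2) : ℕ) : ℝ) ≤ (N : ℝ) - 2 := by
      have : ((∑ p ∈ F, (p - 2) : ℕ) : ℝ) ≤ ((N - 2 : ℕ) : ℝ) := by exact_mod_cast hS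
      rw [Nat.cast_sub hN] at this; simpa using this
    rw [hcast]
    linarith
  rw [show (∑ p ∈ F, (p : ℝ)) = ((∑ p ∈ F, p : ℕ) : ℝ) by push_cast; ring]
  exact hfin
end

section
/- Let m be a positive integer and G ∈ ℤ[X]. Then Φ_m(X) divides G(X) in ℤ[X] if and only if X^m − 1 divides G(X) · ∏_{p prime, p ∣ m} (X^{m/p} − 1) in ℤ[X]. -/
open Polynomial

/-- `Φ_m(X) ∣ G(X)` in `ℤ[X]` if and only if
`X^m − 1 ∣ G(X) · ∏_{p ∣ m} (X^{m/p} − 1)`. -/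
theorem cyclotomic_dvd_iff (m : ℕ) (hm : 0 < m) (G : ℤ[X]) :
    cyclotomic m ℤ ∣ G ↔
      (X ^ m - 1 : ℤ[X]) ∣ G * ∏ p ∈ m.primeFactors, (X ^ (m / p) - 1) := by
  set P : ℤ[X] := ∏ p ∈ m.primeFactors, (X ^ (m / p) - 1) with hP
  set Q : ℤ[X] := ∏ d ∈ m.properDivisors, cyclotomic d ℤ with hQ
  have hfactor : (X ^ m - 1 : ℤ[X]) = cyclotomic m ℤ * Q := by
    rw [← prod_cyclotomic_eq_X_pow_sub_one hm, ← Nat.insert_self_properDivisors hm.ne',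
      Finset.prod_insert Nat.self_notMem_properDivisors]
  have hinj : Function.Injective (Int.castRingHom ℚ) := Int.cast_injective
  constructor
  · intro hG
    -- show Q ∣ P, then X^m - 1 = Φ_m * Q ∣ G * P
    have hQP : Q ∣ P := by
      rw [← map_dvd_map (Int.castRingHom ℚ) hinj
        (monic_prod_of_monic _ _ fun d _ => cyclotomic.monic d ℤ)]
      rw [hP]
      rw [Polynomial.map_prod, Polynomial.map_prod]
      simp only [Polynomial.map_sub, Polynomial.map_pow, Polynomial.map_X, Polynomial.map_one,
        map_cyclotomic_int]
      refine Finset.prod_dvd_of_coprime (fun a _ b _ hab => cyclotomic.isCoprime_rat hab) ?_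
      intro d hd
      obtain ⟨hdvd, hlt⟩ := Nat.mem_properDivisors.mp hd
      have hd0 : 0 < d := Nat.pos_of_dvd_of_pos hdvd hm
      have hmd := Nat.div_mul_cancel hdvd
      have h1 : m / d ≠ 1 := fun h => by rw [h, one_mul] at hmd; omega
      obtain ⟨p, hp, hpd⟩ := (m / d).exists_prime_and_dvd h1
      have hpm : p ∣ m := hpd.trans (Nat.div_dvd_of_dvd hdvd)
      have hpmem : p ∈ m.primeFactors := Nat.mem_primeFactors.mpr ⟨hp, hpm, hm.ne'⟩
      have hdmp : d ∣ m / p := by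
        obtain ⟨k, hk⟩ := hpd
        refine Nat.dvd_div_of_mul_dvd ⟨k, ?_⟩
        rw [hk] at hmd
        rw [← hmd]; ring
      have hmp0 : 0 < m / p := Nat.div_pos (Nat.le_of_dvd hm hpm) hp.pos
      have hdvd' : cyclotomic d ℚ ∣ X ^ (m / p) - 1 := by
        rw [← prod_cyclotomic_eq_X_pow_sub_one hmp0]
        exact Finset.dvd_prod_of_mem _ (Nat.mem_divisors.mpr ⟨hdmp, hmp0.ne'⟩)
      exact hdvd'.trans (Finset.dvd_prod_of_mem _ hpmem)
    rw [hfactor]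
    exact mul_dvd_mul hG hQP
  · intro h
    -- map to ℚ[X]
    rw [← map_dvd_map (Int.castRingHom ℚ) hinj (cyclotomic.monic m ℤ), map_cyclotomic_int]
    have hΦ : Prime (cyclotomic m ℚ) := (cyclotomic.irreducible_rat hm).prime
    have hdvdQ : cyclotomic m ℚ ∣
        Polynomial.map (Int.castRingHom ℚ) G *
          ∏ p ∈ m.primeFactors, ((X : ℚ[X]) ^ (m / p) - 1) := by
      have h1 : cyclotomic m ℚ ∣ Polynomial.map (Int.castRingHom ℚ) (X ^ m - 1) := by
        simpa using cyclotomic.dvd_X_pow_sub_one m ℚ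
      refine h1.trans ?_
      have := Polynomial.map_dvd (Int.castRingHom ℚ) h
      rw [hP] at this
      simpa [Polynomial.map_prod] using this
    rcases hΦ.dvd_mul.mp hdvdQ with hG | hPdvd
    · exact hG
    · exfalso
      obtain ⟨p, hpmem, hpd⟩ := hΦ.exists_mem_finset_dvd hPdvd
      obtain ⟨hp, hpm, -⟩ := Nat.mem_primeFactors.mp hpmem
      have hmp0 : 0 < m / p := Nat.div_pos (Nat.le_of_dvd hm hpm) hp.pos
      rw [← prod_cyclotomic_eq_X_pow_sub_one hmp0] at hpd
      obtain ⟨d, hdmem, hdd⟩ := hΦ.exists_mem_finset_dvd hpd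
      have hdm : d ≠ m := by
        have hle : d ≤ m / p := Nat.divisor_le hdmem
        have : m / p < m := Nat.div_lt_self hm hp.one_lt
        omega
      exact hΦ.not_unit ((cyclotomic.isCoprime_rat hdm).isUnit_of_dvd' hdd dvd_rfl)
end

section
/- Let n ≥ 1 and let V ⊆ (ℂ*)^n be the common zero set of a finite family of polynomials F_1, …, F_k ∈ ℂ[X_1, …, X_n]. Then there exist finitely many torsion cosets B_1, …, B_t ⊆ (ℂ*)^n with B_i ⊆ V for each i, such that the set of points of V all of whose coordinates are roots of unity equals the union over 1 ≤ i ≤ t of the set of points of B_i all of whose coordinates are roots of unity. -/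
set_option maxHeartbeats 2000000
set_option synthInstance.maxHeartbeats 1000000

open IntermediateField Polynomial
open scoped Pointwise

/-- A torsion coset of `(ℂ*)ⁿ` is a set of the form `{x : x^L = ω}` for some
`k × n` integer matrix `L` and some torsion point `ω ∈ (ℂ*)ᵏ`. -/
def IsTorsionCoset {n : ℕ} (B : Set (Fin n → ℂˣ)) : Prop :=
  ∃ (k : ℕ) (L : Matrix (Fin k) (Fin n) ℤ) (ω : Fin k → ℂˣ),
    IsOfFinOrder ω ∧ B = {x : Fin n → ℂˣ | ∀ t, ∏ j, x j ^ L t j = ω t}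

namespace Laurent


lemma pi_isOfFinOrder {ι : Type*} {G : Type*} [Monoid G] {f : ι → G}
    (h : ∀ i, IsOfFinOrder (f i)) [Finite ι] : IsOfFinOrder f := by
  cases nonempty_fintype ι
  rw [isOfFinOrder_iff_pow_eq_one]
  refine ⟨∏ i, orderOf (f i), Finset.prod_pos fun i _ => (h i).orderOf_pos, ?_⟩
  funext i
  have : orderOf (f i) ∣ ∏ i, orderOf (f i) := Finset.dvd_prod_of_mem _ (Finset.mem_univ i)
  simp only [Pi.pow_apply, Pi.one_apply]
  exact orderOf_dvd_iff_pow_eq_one.mp this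

lemma pi_isOfFinOrder_apply {ι : Type*} {G : Type*} [Monoid G] {f : ι → G}
    (h : IsOfFinOrder f) (i : ι) : IsOfFinOrder (f i) := by
  rw [isOfFinOrder_iff_pow_eq_one] at h ⊢
  obtain ⟨m, hm, hf⟩ := h
  exact ⟨m, hm, congrFun hf i⟩

lemma isTorsionCoset_of {n : ℕ} {ι : Type} [Fintype ι] (L : ι → Fin n → ℤ) (ω : ι → ℂˣ)
    (hω : ∀ t, IsOfFinOrder (ω t)) :
    IsTorsionCoset {x : Fin n → ℂˣ | ∀ t, ∏ j, x j ^ L t j = ω t} := by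
  classical
  obtain ⟨e⟩ := Fintype.truncEquivFin ι
  refine ⟨Fintype.card ι, fun t j => L (e.symm t) j, fun t => ω (e.symm t),
    pi_isOfFinOrder (fun t => hω _), ?_⟩
  ext x
  constructor
  · intro hx t; exact hx (e.symm t)
  · intro hx t
    have := hx (e t)
    simpa using this

lemma isTorsionCoset_empty {n : ℕ} : IsTorsionCoset (∅ : Set (Fin n → ℂˣ)) := by
  have h : (∅ : Set (Fin n → ℂˣ)) = {x : Fin n → ℂˣ | ∀ t : Fin 1, ∏ j, x j ^ (0:ℤ) = ((-1 : ℂˣ))} := by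
    ext x
    simp only [Set.mem_empty_iff_false, Set.mem_setOf_eq, false_iff, not_forall]
    refine ⟨0, ?_⟩
    simp only [zpow_zero, Finset.prod_const_one]
    intro h
    have h2 := congrArg (fun u : ℂˣ => (u : ℂ)) h
    simp only [Units.val_one, Units.val_neg] at h2
    norm_num at h2
  rw [h]
  exact isTorsionCoset_of (ι := Fin 1) _ _ (fun t => by
    rw [isOfFinOrder_iff_pow_eq_one]; exact ⟨2, by norm_num, by ext; norm_num⟩)

lemma isTorsionCoset_univ {n : ℕ} : IsTorsionCoset (Set.univ : Set (Fin n → ℂˣ)) := by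
  have h : (Set.univ : Set (Fin n → ℂˣ))
      = {x : Fin n → ℂˣ | ∀ t : (Fin 0), ∏ j, x j ^ (0:ℤ) = 1} := by
    ext x; simp
  rw [h]
  exact isTorsionCoset_of (ι := Fin 0) _ _ (fun t => t.elim0)

/-- A good cover of `W`: finitely many torsion cosets inside `W` covering its torsion points. -/
def GoodCover {n : ℕ} (W : Set (Fin n → ℂˣ)) : Prop :=
  ∃ (t : ℕ) (B : Fin t → Set (Fin n → ℂˣ)),
    (∀ i, IsTorsionCoset (B i)) ∧ (∀ i, B i ⊆ W) ∧
    ∀ x : Fin n → ℂˣ, IsOfFinOrder x → (x ∈ W ↔ ∃ i, x ∈ B i)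

lemma isTorsionCoset_iInter {n : ℕ} {σ : Type} [Fintype σ] (B : σ → Set (Fin n → ℂˣ))
    (h : ∀ s, IsTorsionCoset (B s)) : IsTorsionCoset (⋂ s, B s) := by
  classical
  choose k L ω hω hB using h
  have : (⋂ s, B s) = {x : Fin n → ℂˣ | ∀ t : (Σ s : σ, Fin (k s)), ∏ j, x j ^ L t.1 t.2 j = ω t.1 t.2} := by
    ext x
    simp only [Set.mem_iInter, Set.mem_setOf_eq, Sigma.forall]
    constructor
    · intro hx s t
      have := hx s
      rw [hB s] at this
      exact this t
    · intro hx s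
      rw [hB s]
      intro t
      exact hx s t
  rw [this]
  exact isTorsionCoset_of _ _ (fun t => pi_isOfFinOrder_apply (hω t.1) t.2)

lemma goodCover_iInter {n : ℕ} {σ : Type} [Fintype σ] (Z : σ → Set (Fin n → ℂˣ))
    (h : ∀ s, GoodCover (Z s)) : GoodCover (⋂ s, Z s) := by
  classical
  choose t B hTC hsub hcov using h
  -- index type
  let ι := ∀ s : σ, Fin (t s)
  let C : ι → Set (Fin n → ℂˣ) := fun g => ⋂ s, B s (g s)
  have hC : ∀ g, IsTorsionCoset (C g) := fun g => isTorsionCoset_iInter _ (fun s => hTC s (g s))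
  have hCsub : ∀ g, C g ⊆ ⋂ s, Z s := by
    intro g x hx
    simp only [Set.mem_iInter]
    intro s
    exact hsub s (g s) (Set.mem_iInter.mp hx s)
  obtain ⟨e⟩ := Fintype.truncEquivFin ι
  refine ⟨Fintype.card ι, fun i => C (e.symm i), fun i => hC _, fun i => hCsub _, ?_⟩
  intro x hx
  constructor
  · intro hxZ
    have : ∀ s, ∃ i, x ∈ B s i := by
      intro s
      exact (hcov s x hx).mp (Set.mem_iInter.mp hxZ s)
    choose g hg using this
    exact ⟨e g, by simpa [C] using Set.mem_iInter.mpr hg⟩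
  · rintro ⟨i, hi⟩
    exact hCsub (e.symm i) hi



/-- Partition a vanishing sum into minimal vanishing subsums, encoded by a
"representative" map `π`. -/
lemma exists_partition_min {ι : Type*} [DecidableEq ι] (v : ι → ℂ) :
    ∀ s : Finset ι, (∑ i ∈ s, v i = 0) →
    ∃ π : ι → ι, (∀ i ∈ s, π i ∈ s) ∧ (∀ i ∈ s, π (π i) = π i) ∧
      (∀ b, ∀ i ∈ s.filter (fun i => π i = b), ∀ j, j ∈ s.filter (fun i => π i = b) ↔ (j ∈ s ∧ π j = b)) ∧
      (∀ b ∈ s, ((s.filter (fun i => π i = b)).Nonempty →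
        (∑ i ∈ s.filter (fun i => π i = b), v i = 0) ∧
        (∀ T ⊆ s.filter (fun i => π i = b), T.Nonempty → T ≠ s.filter (fun i => π i = b) →
          ∑ i ∈ T, v i ≠ 0))) := by
  classical
  intro s
  induction s using Finset.strongInduction with
  | _ s ih =>
    intro hsum
    rcases s.eq_empty_or_nonempty with rfl | hne
    · exact ⟨id, by simp, by simp, by simp, by simp⟩
    -- candidates: nonempty vanishing subsets
    have hcand : (s.powerset.filter (fun T => T.Nonempty ∧ ∑ i ∈ T, v i = 0)).Nonempty := by
      refine ⟨s, ?_⟩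
      simp only [Finset.mem_filter, Finset.mem_powerset]
      exact ⟨le_refl s, hne, hsum⟩
    obtain ⟨T₀, hT₀mem, hT₀min⟩ := Finset.exists_min_image _ Finset.card hcand
    simp only [Finset.mem_filter, Finset.mem_powerset] at hT₀mem
    obtain ⟨hT₀sub, hT₀ne, hT₀sum⟩ := hT₀mem
    have hT₀minimal : ∀ T ⊆ T₀, T.Nonempty → T ≠ T₀ → ∑ i ∈ T, v i ≠ 0 := by
      intro T hTsub hTne hTneq hTsum
      have hcard : T₀.card ≤ T.card := by
        apply hT₀min
        simp only [Finset.mem_filter, Finset.mem_powerset]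
        exact ⟨hTsub.trans hT₀sub, hTne, hTsum⟩
      have : T = T₀ := Finset.eq_of_subset_of_card_le hTsub hcard
      exact hTneq this
    obtain ⟨b₀, hb₀⟩ := hT₀ne
    -- recurse on s \ T₀
    have hssub : s \ T₀ ⊂ s := by
      apply Finset.sdiff_ssubset hT₀sub ⟨b₀, hb₀⟩
    have hsum' : ∑ i ∈ s \ T₀, v i = 0 := by
      have := Finset.sum_sdiff hT₀sub (f := v)
      rw [hT₀sum] at this
      -- ∑ (s\T₀) + ∑ T₀ = ∑ s
      have h2 : ∑ i ∈ s \ T₀, v i + ∑ i ∈ T₀, v i = ∑ i ∈ s, v i := Finset.sum_sdiff hT₀sub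
      rw [hT₀sum, hsum, add_zero] at h2
      exact h2
    obtain ⟨π', hπ'mem, hπ'idem, _, hπ'fib⟩ := ih (s \ T₀) hssub hsum'
    set π : ι → ι := fun i => if i ∈ T₀ then b₀ else π' i with hπdef
    have hb₀s : b₀ ∈ s := hT₀sub hb₀
    have hπb₀ : π b₀ = b₀ := by simp [hπdef, hb₀]
    have hmem : ∀ i ∈ s, π i ∈ s := by
      intro i hi
      by_cases h : i ∈ T₀
      · simpa [hπdef, h] using hb₀s
      · have hi' : i ∈ s \ T₀ := Finset.mem_sdiff.mpr ⟨hi, h⟩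
        have := hπ'mem i hi'
        simp only [hπdef, h, if_false]
        exact (Finset.mem_sdiff.mp this).1
    have hnotT₀ : ∀ i ∈ s \ T₀, π' i ∉ T₀ := by
      intro i hi
      exact (Finset.mem_sdiff.mp (hπ'mem i hi)).2
    have hidem : ∀ i ∈ s, π (π i) = π i := by
      intro i hi
      by_cases h : i ∈ T₀
      · simp [hπdef, h, hb₀]
      · have hi' : i ∈ s \ T₀ := Finset.mem_sdiff.mpr ⟨hi, h⟩
        have h1 : π i = π' i := by simp [hπdef, h]
        rw [h1]
        have h2 : π' i ∉ T₀ := hnotT₀ i hi'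
        simp only [hπdef, h2, if_false]
        exact hπ'idem i hi'
    -- fibers
    have hfib_eq : ∀ b, s.filter (fun i => π i = b) =
        (if b = b₀ then T₀ else ∅) ∪ (s \ T₀).filter (fun i => π' i = b) := by
      intro b
      ext i
      simp only [Finset.mem_filter, Finset.mem_union, Finset.mem_sdiff]
      constructor
      · rintro ⟨his, hpi⟩
        by_cases h : i ∈ T₀
        · left
          have : b = b₀ := by simp [hπdef, h] at hpi; exact hpi.symm
          simp [this, h]
        · right
          refine ⟨⟨his, h⟩, ?_⟩
          simpa [hπdef, h] using hpi
      · rintro (h | ⟨⟨his, hiT⟩, hpi⟩)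
        · split_ifs at h with hb
          · subst hb
            exact ⟨hT₀sub h, by simp [hπdef, h]⟩
          · simp at h
        · exact ⟨his, by simpa [hπdef, hiT] using hpi⟩
    refine ⟨π, hmem, hidem, ?_, ?_⟩
    · intro b i _ j
      simp only [Finset.mem_filter]
    · intro b hb hfne
      rw [hfib_eq b]
      by_cases hbb : b = b₀
      · subst hbb
        have hfib' : (s \ T₀).filter (fun i => π' i = b) = ∅ := by
          apply Finset.filter_eq_empty_iff.mpr
          intro i hi hpi
          exact hnotT₀ i hi (hpi ▸ hb₀)
        simp only [if_pos rfl, hfib', Finset.union_empty]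
        exact ⟨hT₀sum, hT₀minimal⟩
      · simp only [if_neg hbb, Finset.empty_union]
        have hbs' : b ∈ s \ T₀ := by
          -- b is in the image of π' restricted to s\T₀ since fiber nonempty
          rw [hfib_eq b] at hfne
          simp only [if_neg hbb, Finset.empty_union] at hfne
          obtain ⟨i, hi⟩ := hfne
          simp only [Finset.mem_filter] at hi
          have := hπ'mem i hi.1
          rwa [hi.2] at this
        have hfne' : ((s \ T₀).filter (fun i => π' i = b)).Nonempty := by
          rw [hfib_eq b] at hfne
          simpa only [if_neg hbb, Finset.empty_union] using hfne
        exact hπ'fib b hbs' hfne'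



lemma mann_core {ι : Type*} [DecidableEq ι] (s : Finset ι) (r : ι → ℚ) (μ : ι → ℂˣ)
    {i₀ : ι} (hi₀s : i₀ ∈ s) (hμi₀ : μ i₀ = 1)
    {N : ℕ} (hN0 : 0 < N) (hNpow : ∀ i ∈ s, μ i ^ N = 1)
    (hsum : ∑ i ∈ s, (r i : ℂ) * ((μ i : ℂˣ) : ℂ) = 0)
    (hmin : ∀ T ⊆ s, T.Nonempty → T ≠ s → ∑ i ∈ T, (r i : ℂ) * ((μ i : ℂˣ) : ℂ) ≠ 0)
    {p : ℕ} (hp : p.Prime) (hpN : p ∣ N) (hcase : s.card < p ∨ p * p ∣ N) :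
    ∀ i ∈ s, μ i ^ (N / p) = 1 := by
  classical
  haveI := Fact.mk hp
  set a := N.factorization p with hadef
  have ha1 : 1 ≤ a := hp.factorization_pos_of_dvd hN0.ne' hpN
  set N' := N / p ^ a with hN'def
  have hNfac : p ^ a * N' = N := Nat.ordProj_mul_ordCompl_eq_self N p
  have hpN' : ¬ p ∣ N' := Nat.not_dvd_ordCompl hp hN0.ne'
  have hN'0 : 0 < N' := by
    rcases Nat.eq_zero_or_pos N' with h | h
    · rw [h, mul_zero] at hNfac; omega
    · exact h
  -- primitive root in ℂ
  set ζc : ℂ := Complex.exp (2 * Real.pi * Complex.I / N) with hζcdef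
  have hζ : IsPrimitiveRoot ζc N := Complex.isPrimitiveRoot_exp N hN0.ne'
  haveI : NeZero N := ⟨hN0.ne'⟩
  -- exponents
  have hecho : ∀ i ∈ s, ∃ m : ℕ, ζc ^ m = ((μ i : ℂˣ) : ℂ) := by
    intro i hi
    have hpow : ((μ i : ℂˣ) : ℂ) ^ N = 1 := by
      rw [← Units.val_pow_eq_pow_val, hNpow i hi, Units.val_one]
    obtain ⟨m, _, hm⟩ := hζ.eq_pow_of_pow_eq_one hpow
    exact ⟨m, hm⟩
  set e : ι → ℕ := fun i => if h : i ∈ s then (hecho i h).choose else 0 with hedef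
  have he : ∀ i ∈ s, ζc ^ (e i) = ((μ i : ℂˣ) : ℂ) := by
    intro i hi
    simp only [hedef, dif_pos hi]
    exact (hecho i hi).choose_spec
  -- residues
  set w : ZMod p := (N' : ZMod p)⁻¹ with hwdef
  have hN'ne : (N' : ZMod p) ≠ 0 := by
    rw [Ne, ZMod.natCast_eq_zero_iff]
    exact hpN'
  set c : ι → ℕ := fun i => (((e i : ZMod p)) * w).val with hcdef
  have hclt : ∀ i, c i < p := fun i => ZMod.val_lt _
  have hc : ∀ i, ((c i : ZMod p)) * (N' : ZMod p) = (e i : ZMod p) := by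
    intro i
    have : ((c i : ZMod p)) = (e i : ZMod p) * w := by
      simp only [hcdef]
      rw [ZMod.natCast_val, ZMod.cast_id]
    rw [this, hwdef, mul_assoc, inv_mul_cancel₀ hN'ne, mul_one]
  have hdvd : ∀ i, (p : ℤ) ∣ ((e i : ℤ) - (c i : ℤ) * (N' : ℤ)) := by
    intro i
    rw [← ZMod.intCast_zmod_eq_zero_iff_dvd]
    push_cast
    rw [hc i]
    ring
  -- units
  have hζune : IsUnit ζc := hζ.isUnit hN0.ne'
  set ζu : ℂˣ := hζune.unit with hζudef
  have hζuval : (ζu : ℂ) = ζc := hζune.unit_spec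
  have hζuN : ζu ^ N = 1 := by
    ext
    rw [Units.val_pow_eq_pow_val, hζuval, hζ.pow_eq_one, Units.val_one]
  have hμe : ∀ i ∈ s, μ i = ζu ^ e i := by
    intro i hi
    ext
    rw [Units.val_pow_eq_pow_val, hζuval, he i hi]
  -- the cyclotomic field as an intermediate field of ℂ
  set K : IntermediateField ℚ ℂ := ℚ⟮ζc⟯ with hKdef
  set zK : ↥K := AdjoinSimple.gen ℚ ζc with hzKdef
  have halg : algebraMap (↥K) ℂ zK = ζc := AdjoinSimple.algebraMap_gen ℚ ζc
  have hKinj : Function.Injective (algebraMap (↥K) ℂ) := (algebraMap (↥K) ℂ).injective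
  have hzK : IsPrimitiveRoot zK N := by
    refine ⟨?_, ?_⟩
    · apply hKinj
      rw [map_pow, halg, map_one]
      exact hζ.pow_eq_one
    · intro l hl
      apply hζ.dvd_of_pow_eq_one
      calc ζc ^ l = algebraMap (↥K) ℂ (zK ^ l) := by rw [map_pow, halg]
        _ = 1 := by rw [hl, map_one]
  have hzKne : IsUnit zK := hzK.isUnit hN0.ne'
  set uz : (↥K)ˣ := hzKne.unit with huzdef
  have huzval : ((uz : (↥K)ˣ) : ↥K) = zK := hzKne.unit_spec
  set θK : ↥K := zK ^ p with hθKdef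
  set ξK : ↥K := zK ^ N' with hξKdef
  have hθprim : IsPrimitiveRoot θK (N / p) :=
    IsPrimitiveRoot.pow hN0 hzK (Nat.mul_div_cancel' hpN).symm
  set L : IntermediateField ℚ (↥K) := ℚ⟮θK⟯ with hLdef
  have hθKL : θK ∈ L := mem_adjoin_simple_self ℚ θK
  -- integrality and finrank computations
  have hNp0 : 0 < N / p := Nat.div_pos (Nat.le_of_dvd hN0 hpN) hp.pos
  have hintζc : IsIntegral ℚ ζc :=
    ⟨X ^ N - Polynomial.C 1, monic_X_pow_sub_C _ hN0.ne', by
      simp [eval₂_sub, hζ.pow_eq_one]⟩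
  have hintθK : IsIntegral ℚ θK :=
    ⟨X ^ (N / p) - Polynomial.C 1, monic_X_pow_sub_C _ hNp0.ne', by
      simp [eval₂_sub, hθprim.pow_eq_one]⟩
  haveI hfdK : FiniteDimensional ℚ (↥K) := IntermediateField.adjoin.finiteDimensional hintζc
  haveI hfdLK : Module.Finite (↥L) (↥K) := FiniteDimensional.right ℚ (↥L) (↥K)
  have hrkK : Module.finrank ℚ (↥K) = Nat.totient N := by
    have h1 : Module.finrank ℚ (↥(ℚ⟮ζc⟯)) = (minpoly ℚ ζc).natDegree :=
      IntermediateField.adjoin.finrank hintζc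
    rw [hKdef, h1, ← Polynomial.cyclotomic_eq_minpoly_rat hζ hN0, natDegree_cyclotomic]
  have hrkL : Module.finrank ℚ (↥L) = Nat.totient (N / p) := by
    have h1 : Module.finrank ℚ (↥(ℚ⟮θK⟯)) = (minpoly ℚ θK).natDegree :=
      IntermediateField.adjoin.finrank hintθK
    rw [hLdef, h1, ← Polynomial.cyclotomic_eq_minpoly_rat hθprim hNp0, natDegree_cyclotomic]
  have htower : Module.finrank ℚ (↥L) * Module.finrank (↥L) (↥K) = Module.finrank ℚ (↥K) :=
    Module.finrank_mul_finrank ℚ (↥L) (↥K)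
  -- L⟮ξK⟯ = ⊤
  have hKtop : IntermediateField.adjoin ℚ {zK} = (⊤ : IntermediateField ℚ (↥K)) := by
    have hmap : (@IntermediateField.adjoin ℚ _ _ _ K.algebra' {zK}).map K.val = IntermediateField.adjoin ℚ {ζc} := by
      rw [IntermediateField.adjoin_map, Set.image_singleton]
      have hvz : K.val zK = ζc := halg
      rw [hvz]
    rw [eq_top_iff]
    intro w _
    have hw2 : K.val w ∈ (@IntermediateField.adjoin ℚ _ _ _ K.algebra' {zK}).map K.val := by
      rw [hmap]
      exact w.2
    rw [← SetLike.mem_coe, IntermediateField.coe_map] at hw2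
    obtain ⟨w', hw', heq⟩ := hw2
    have : w' = w := hKinj heq
    rw [← this]
    convert hw'
    exact Iff.rfl
  have hθKM : θK ∈ (↥L)⟮ξK⟯ := by
    have h1 := IntermediateField.algebraMap_mem ((↥L)⟮ξK⟯) (⟨θK, hθKL⟩ : ↥L)
    rwa [IntermediateField.algebraMap_apply] at h1
  have hξKM : ξK ∈ (↥L)⟮ξK⟯ := mem_adjoin_simple_self (↥L) ξK
  have hcop : Nat.Coprime p N' := (hp.coprime_iff_not_dvd).mpr hpN'
  obtain ⟨x0, y0, hxy⟩ := Nat.isCoprime_iff_coprime.mpr hcop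
  have hzk_eq : zK = θK ^ (x0 : ℤ) * ξK ^ (y0 : ℤ) := by
    have hu : uz = (uz ^ (p : ℤ)) ^ x0 * (uz ^ (N' : ℤ)) ^ y0 := by
      rw [← zpow_mul, ← zpow_mul, ← zpow_add]
      rw [show (p : ℤ) * x0 + (N' : ℤ) * y0 = 1 by linarith [hxy]]
      exact (zpow_one uz).symm
    have h2 := congrArg (fun u : (↥K)ˣ => (u : ↥K)) hu
    simp only [Units.val_mul, Units.val_zpow_eq_zpow_val, huzval] at h2
    rw [zpow_natCast, zpow_natCast] at h2
    exact h2
  have hzKM : zK ∈ (↥L)⟮ξK⟯ := by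
    rw [hzk_eq]
    exact mul_mem (zpow_mem hθKM _) (zpow_mem hξKM _)
  have hMtop : (↥L)⟮ξK⟯ = (⊤ : IntermediateField (↥L) (↥K)) := by
    apply IntermediateField.restrictScalars_injective ℚ
    rw [IntermediateField.restrictScalars_top, eq_top_iff, ← hKtop]
    apply IntermediateField.adjoin_le_iff.mpr
    intro z hz
    rw [Set.mem_singleton_iff] at hz
    subst hz
    exact hzKM
  have hrkLtop : (minpoly (↥L) ξK).natDegree = Module.finrank (↥L) (↥K) := by
    have h1 := IntermediateField.adjoin.finrank (IsIntegral.of_finite (↥L) ξK)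
    rw [hMtop, IntermediateField.finrank_top'] at h1
    exact h1.symm
  -- fibers and the grouped relation
  set fib : ℕ → Finset ι := fun cc => s.filter (fun i => c i = cc) with hfibdef
  set ηu : ι → (↥K)ˣ := fun i => uz ^ ((e i : ℤ) - (c i : ℤ) * (N' : ℤ)) with hηudef
  have hηL : ∀ i, ((ηu i : (↥K)ˣ) : ↥K) ∈ L := by
    intro i
    obtain ⟨d, hd⟩ := hdvd i
    have h1 : ηu i = (uz ^ (p : ℤ)) ^ d := by
      rw [← zpow_mul]
      show uz ^ ((e i : ℤ) - (c i : ℤ) * (N' : ℤ)) = uz ^ ((p : ℤ) * d)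
      rw [hd]
    have h2 : ((ηu i : (↥K)ˣ) : ↥K) = θK ^ d := by
      rw [h1]
      rw [Units.val_zpow_eq_zpow_val, Units.val_zpow_eq_zpow_val, huzval, zpow_natCast]
    rw [h2]
    exact zpow_mem hθKL d
  set AL : ℕ → ↥L := fun cc => ∑ i ∈ fib cc, algebraMap ℚ (↥L) (r i) * ⟨((ηu i : (↥K)ˣ) : ↥K), hηL i⟩
    with hALdef
  have hALcoe : ∀ cc, ((AL cc : ↥L) : ↥K)
      = ∑ i ∈ fib cc, algebraMap ℚ (↥K) (r i) * ((ηu i : (↥K)ˣ) : ↥K) := by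
    intro cc
    rw [hALdef]
    simp only [AddSubmonoidClass.coe_finset_sum, MulMemClass.coe_mul]
    apply Finset.sum_congr rfl
    intro i _
    congr 1
  have hsumK : ∑ i ∈ s, algebraMap ℚ (↥K) (r i) * (zK ^ e i) = 0 := by
    apply hKinj
    rw [map_sum, map_zero, ← hsum]
    apply Finset.sum_congr rfl
    intro i hi
    rw [map_mul, map_pow, halg, he i hi]
    congr 1
  have hzdecomp : ∀ i, zK ^ e i = ξK ^ (c i) * ((ηu i : (↥K)ˣ) : ↥K) := by
    intro i
    have h1 : uz ^ ((e i : ℤ)) = (uz ^ (N' : ℤ)) ^ ((c i : ℤ)) * ηu i := by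
      rw [← zpow_mul, hηudef, ← zpow_add]
      congr 1
      ring
    have h2 := congrArg (fun u : (↥K)ˣ => (u : ↥K)) h1
    simp only [Units.val_mul, Units.val_zpow_eq_zpow_val, huzval] at h2
    rw [zpow_natCast, zpow_natCast, zpow_natCast] at h2
    rw [h2, hξKdef]
  have hrelK : ∑ cc ∈ Finset.range p, ((AL cc : ↥L) : ↥K) * ξK ^ cc = 0 := by
    calc ∑ cc ∈ Finset.range p, ((AL cc : ↥L) : ↥K) * ξK ^ cc
        = ∑ cc ∈ Finset.range p, ∑ i ∈ fib cc, algebraMap ℚ (↥K) (r i) * (zK ^ e i) := by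
          apply Finset.sum_congr rfl
          intro cc _
          rw [hALcoe cc, Finset.sum_mul]
          apply Finset.sum_congr rfl
          intro i hi
          have hci : c i = cc := (Finset.mem_filter.mp hi).2
          rw [hzdecomp i, hci]
          ring
      _ = ∑ i ∈ s, algebraMap ℚ (↥K) (r i) * (zK ^ e i) :=
          Finset.sum_fiberwise_of_maps_to (fun i _ => Finset.mem_range.mpr (hclt i)) _
      _ = 0 := hsumK
  set P : Polynomial (↥L) := ∑ cc ∈ Finset.range p, Polynomial.C (AL cc) * X ^ cc with hPdef
  have haevalP : Polynomial.aeval ξK P = 0 := by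
    rw [hPdef, map_sum, ← hrelK]
    apply Finset.sum_congr rfl
    intro cc _
    rw [map_mul, map_pow, Polynomial.aeval_C, Polynomial.aeval_X,
      IntermediateField.algebraMap_apply]
  have hPcoeff : ∀ cc, cc < p → P.coeff cc = AL cc := by
    intro cc hcc
    rw [hPdef, Polynomial.finset_sum_coeff]
    simp only [Polynomial.coeff_C_mul, Polynomial.coeff_X_pow, mul_ite, mul_one, mul_zero]
    rw [Finset.sum_ite_eq (Finset.range p) cc (fun d => AL d)]
    rw [if_pos (Finset.mem_range.mpr hcc)]
  have hdegP : P.natDegree ≤ p - 1 := by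
    apply Polynomial.natDegree_sum_le_of_forall_le
    intro cc hcc
    refine le_trans (Polynomial.natDegree_C_mul_X_pow_le _ _) ?_
    have := Finset.mem_range.mp hcc
    omega
  have htotpos : 0 < N'.totient := Nat.totient_pos.mpr hN'0
  -- main case analysis, producing vanishing of all the AL cc
  have hAL0 : ∀ cc, cc < p → AL cc = 0 := by
    by_cases h2a : 2 ≤ a
    · -- here the relative degree is p
      have hNsplit : N / p = p ^ (a - 1) * N' := by
        have hsp : p ^ a = p * p ^ (a - 1) := by
          conv_lhs => rw [show a = 1 + (a - 1) by omega]
          rw [pow_add, pow_one]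
        have : N = p * (p ^ (a - 1) * N') := by rw [← hNfac, hsp]; ring
        rw [this, Nat.mul_div_cancel_left _ hp.pos]
      have hcopa : Nat.Coprime (p ^ a) N' := Nat.Coprime.pow_left a hcop
      have hcopa1 : Nat.Coprime (p ^ (a - 1)) N' := Nat.Coprime.pow_left _ hcop
      have htN : N.totient = p ^ (a - 1) * (p - 1) * N'.totient := by
        rw [← hNfac, Nat.totient_mul hcopa, Nat.totient_prime_pow hp (by omega : 0 < a)]
      have htNp : (N / p).totient = p ^ (a - 2) * (p - 1) * N'.totient := by
        rw [hNsplit, Nat.totient_mul hcopa1, Nat.totient_prime_pow hp (by omega : 0 < a - 1)]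
        have hsub : a - 1 - 1 = a - 2 := by omega
        rw [hsub]
      have hsp2 : p ^ (a - 1) = p ^ (a - 2) * p := by
        conv_lhs => rw [show a - 1 = (a - 2) + 1 by omega]
        rw [pow_succ]
      have hDL : Module.finrank (↥L) (↥K) = p := by
        have h1 : (p ^ (a - 2) * (p - 1) * N'.totient) * Module.finrank (↥L) (↥K)
            = (p ^ (a - 2) * (p - 1) * N'.totient) * p := by
          calc (p ^ (a - 2) * (p - 1) * N'.totient) * Module.finrank (↥L) (↥K)
              = (N / p).totient * Module.finrank (↥L) (↥K) := by rw [htNp]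
            _ = Module.finrank ℚ (↥L) * Module.finrank (↥L) (↥K) := by rw [hrkL]
            _ = Module.finrank ℚ (↥K) := htower
            _ = N.totient := hrkK
            _ = p ^ (a - 1) * (p - 1) * N'.totient := htN
            _ = (p ^ (a - 2) * (p - 1) * N'.totient) * p := by rw [hsp2]; ring
        have hpos : 0 < p ^ (a - 2) * (p - 1) * N'.totient := by
          have := hp.two_le
          have h2 : 0 < p - 1 := by omega
          positivity
        exact Nat.eq_of_mul_eq_mul_left hpos h1
      have hP0 : P = 0 := by
        by_contra hP0
        have hmd := minpoly.degree_le_of_ne_zero (↥L) ξK hP0 haevalP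
        have h1 : (minpoly (↥L) ξK).natDegree ≤ P.natDegree :=
          Polynomial.natDegree_le_natDegree hmd
        rw [hrkLtop, hDL] at h1
        have := hp.two_le
        omega
      intro cc hcc
      rw [← hPcoeff cc hcc, hP0, Polynomial.coeff_zero]
    · -- a = 1, and necessarily s.card < p
      have ha : a = 1 := by omega
      have hcardp : s.card < p := by
        rcases hcase with h | h
        · exact h
        · exfalso
          apply h2a
          have : p ^ 2 ∣ N := by rwa [pow_two]
          exact (hp.pow_dvd_iff_le_factorization hN0.ne').mp this
      have hNp' : N = p * N' := by rw [← hNfac, ha, pow_one]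
      have hNdivp : N / p = N' := by rw [hNp', Nat.mul_div_cancel_left _ hp.pos]
      have htN : N.totient = (p - 1) * N'.totient := by
        rw [hNp', Nat.totient_mul hcop, Nat.totient_prime hp]
      have htNp : (N / p).totient = N'.totient := by rw [hNdivp]
      have hDL : Module.finrank (↥L) (↥K) = p - 1 := by
        have h1 : N'.totient * Module.finrank (↥L) (↥K) = N'.totient * (p - 1) := by
          calc N'.totient * Module.finrank (↥L) (↥K)
              = (N / p).totient * Module.finrank (↥L) (↥K) := by rw [htNp]
            _ = Module.finrank ℚ (↥L) * Module.finrank (↥L) (↥K) := by rw [hrkL]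
            _ = Module.finrank ℚ (↥K) := htower
            _ = N.totient := hrkK
            _ = (p - 1) * N'.totient := htN
            _ = N'.totient * (p - 1) := by ring
        exact Nat.eq_of_mul_eq_mul_left htotpos h1
      -- geometric relation
      have hξp : ξK ^ p = 1 := by
        rw [hξKdef, ← pow_mul]
        apply (hzK.pow_eq_one_iff_dvd _).mpr
        rw [hNp']
        exact ⟨1, by ring⟩
      have hξne1 : ξK ≠ 1 := by
        intro h1
        have hdvd' := (hzK.pow_eq_one_iff_dvd N').mp (by rw [← hξKdef]; exact h1)
        have hlt : N' < N := by
          rw [hNp']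
          have := hp.two_le
          nlinarith [hN'0]
        exact absurd (Nat.le_of_dvd hN'0 hdvd') (by omega)
      have hgeo : ∑ cc ∈ Finset.range p, ξK ^ cc = 0 := by
        rw [geom_sum_eq hξne1 p, hξp]
        simp
      have hp1 : p = (p - 1) + 1 := by omega
      have hrelK' : (∑ cc ∈ Finset.range (p - 1), ((AL cc : ↥L) : ↥K) * ξK ^ cc)
          + ((AL (p - 1) : ↥L) : ↥K) * ξK ^ (p - 1) = 0 := by
        rw [← Finset.sum_range_succ (fun cc => ((AL cc : ↥L) : ↥K) * ξK ^ cc) (p - 1), ← hp1]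
        exact hrelK
      have hgeo' : (∑ cc ∈ Finset.range (p - 1), ξK ^ cc) + ξK ^ (p - 1) = 0 := by
        rw [← Finset.sum_range_succ (fun cc => ξK ^ cc) (p - 1), ← hp1]
        exact hgeo
      set Q : Polynomial (↥L) := ∑ cc ∈ Finset.range (p - 1),
        Polynomial.C (AL cc - AL (p - 1)) * X ^ cc with hQdef
      have haevalQ : Polynomial.aeval ξK Q = 0 := by
        rw [hQdef, map_sum]
        have hstep : ∀ cc, (Polynomial.aeval ξK) (Polynomial.C (AL cc - AL (p - 1)) * X ^ cc)
            = (((AL cc : ↥L) : ↥K) - ((AL (p - 1) : ↥L) : ↥K)) * ξK ^ cc := by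
          intro cc
          rw [map_mul, map_pow, Polynomial.aeval_C, Polynomial.aeval_X,
            IntermediateField.algebraMap_apply]
          congr 1
        simp only [hstep]
        have hexp : ∑ cc ∈ Finset.range (p - 1),
            ((((AL cc : ↥L) : ↥K)) - ((AL (p - 1) : ↥L) : ↥K)) * ξK ^ cc
            = (∑ cc ∈ Finset.range (p - 1), ((AL cc : ↥L) : ↥K) * ξK ^ cc)
              - ((AL (p - 1) : ↥L) : ↥K) * (∑ cc ∈ Finset.range (p - 1), ξK ^ cc) := by
          rw [Finset.mul_sum, ← Finset.sum_sub_distrib]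
          apply Finset.sum_congr rfl
          intro cc _
          ring
        rw [hexp]
        linear_combination hrelK' - ((AL (p - 1) : ↥L) : ↥K) * hgeo'
      have hQ0 : Q = 0 := by
        by_contra hQ0
        have hmd := minpoly.degree_le_of_ne_zero (↥L) ξK hQ0 haevalQ
        have h1 : (minpoly (↥L) ξK).natDegree ≤ Q.natDegree :=
          Polynomial.natDegree_le_natDegree hmd
        have hdegQ : Q.natDegree ≤ p - 2 := by
          apply Polynomial.natDegree_sum_le_of_forall_le
          intro cc hcc
          refine le_trans (Polynomial.natDegree_C_mul_X_pow_le _ _) ?_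
          have := Finset.mem_range.mp hcc
          omega
        rw [hrkLtop, hDL] at h1
        have := hp.two_le
        omega
      have hQcoeff : ∀ cc, cc < p - 1 → AL cc = AL (p - 1) := by
        intro cc hcc
        have h1 : Q.coeff cc = AL cc - AL (p - 1) := by
          rw [hQdef, Polynomial.finset_sum_coeff]
          simp only [Polynomial.coeff_C_mul, Polynomial.coeff_X_pow, mul_ite, mul_one, mul_zero]
          rw [Finset.sum_ite_eq (Finset.range (p - 1)) cc (fun d => AL d - AL (p - 1))]
          rw [if_pos (Finset.mem_range.mpr hcc)]
        rw [hQ0, Polynomial.coeff_zero] at h1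
        have := h1.symm
        rwa [sub_eq_zero] at this
      -- some fiber is empty
      have hempty : ∃ c0, c0 < p ∧ fib c0 = ∅ := by
        by_contra hbad
        push_neg at hbad
        have hinj : ∀ cc ∈ Finset.range p, ∃ i ∈ s, c i = cc := by
          intro cc hcc
          have hne := hbad cc (Finset.mem_range.mp hcc)
          obtain ⟨i, hi⟩ := hne
          rw [hfibdef] at hi
          simp only [Finset.mem_filter] at hi
          exact ⟨i, hi.1, hi.2⟩
        classical
        set g : ℕ → ι := fun cc => if h : ∃ i ∈ s, c i = cc then h.choose else i₀ with hgdef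
        have hgmem : ∀ cc ∈ Finset.range p, g cc ∈ s := by
          intro cc hcc
          have h := hinj cc hcc
          simp only [hgdef, dif_pos h]
          exact h.choose_spec.1
        have hgval : ∀ cc ∈ Finset.range p, c (g cc) = cc := by
          intro cc hcc
          have h := hinj cc hcc
          simp only [hgdef, dif_pos h]
          exact h.choose_spec.2
        have hcard := Finset.card_le_card_of_injOn g hgmem (by
          intro cc1 h1 cc2 h2 heq
          have := hgval cc1 (by simpa using h1)
          have h2' := hgval cc2 (by simpa using h2)
          rw [← this, ← h2', heq])
        rw [Finset.card_range] at hcard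
        omega
      obtain ⟨c0, hc0p, hfib0⟩ := hempty
      have hALc0 : AL c0 = 0 := by
        rw [hALdef]
        simp only []
        rw [hfib0]
        exact Finset.sum_empty
      by_cases hc0 : c0 = p - 1
      · intro cc hcc
        by_cases h : cc = p - 1
        · rw [h, ← hc0]; exact hALc0
        · rw [hQcoeff cc (by omega), ← hc0]; exact hALc0
      · have hA1 : AL (p - 1) = 0 := by
          rw [← hQcoeff c0 (by omega), hALc0]
        intro cc hcc
        by_cases h : cc = p - 1
        · rw [h]; exact hA1
        · rw [hQcoeff cc (by omega)]; exact hA1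
  -- fibers have vanishing sums in ℂ
  have hfibsum : ∀ cc, cc < p → ∑ i ∈ fib cc, (r i : ℂ) * ((μ i : ℂˣ) : ℂ) = 0 := by
    intro cc hcc
    have hKsum : ∑ i ∈ fib cc, algebraMap ℚ (↥K) (r i) * (zK ^ e i) = 0 := by
      calc ∑ i ∈ fib cc, algebraMap ℚ (↥K) (r i) * zK ^ e i
          = ∑ i ∈ fib cc, (algebraMap ℚ (↥K) (r i) * ((ηu i : (↥K)ˣ) : ↥K)) * ξK ^ cc := by
            apply Finset.sum_congr rfl
            intro i hi
            have hci : c i = cc := (Finset.mem_filter.mp hi).2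
            rw [hzdecomp i, hci]
            ring
        _ = ((AL cc : ↥L) : ↥K) * ξK ^ cc := by rw [hALcoe cc, Finset.sum_mul]
        _ = 0 := by rw [hAL0 cc hcc]; simp
    have h2 := congrArg (algebraMap (↥K) ℂ) hKsum
    rw [map_sum, map_zero] at h2
    rw [← h2]
    apply Finset.sum_congr rfl
    intro i hi
    have his : i ∈ s := Finset.filter_subset _ _ hi
    rw [map_mul, map_pow, halg, he i his]
    congr 1
  -- all of s is a single fiber, namely that of c i₀ = 0
  have hi₀fib : i₀ ∈ fib (c i₀) := by
    rw [hfibdef]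
    simp [hi₀s]
  have hfib_i₀ : fib (c i₀) = s := by
    by_contra hne
    exact hmin (fib (c i₀)) (Finset.filter_subset _ _) ⟨i₀, hi₀fib⟩ hne
      (hfibsum (c i₀) (hclt i₀))
  have hci₀ : c i₀ = 0 := by
    have hei₀ : N ∣ e i₀ := by
      apply (hζ.pow_eq_one_iff_dvd (e i₀)).mp
      rw [he i₀ hi₀s, hμi₀, Units.val_one]
    have hpe : p ∣ e i₀ := dvd_trans hpN hei₀
    have h0 : ((e i₀ : ℕ) : ZMod p) = 0 := (ZMod.natCast_eq_zero_iff _ _).mpr hpe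
    simp [hcdef, h0]
  intro i hi
  have hci : c i = 0 := by
    have h1 : i ∈ fib (c i₀) := by rw [hfib_i₀]; exact hi
    have h2 : c i = c i₀ := (Finset.mem_filter.mp h1).2
    rw [h2, hci₀]
  have hpei : p ∣ e i := by
    have h1 := hc i
    rw [hci] at h1
    simp only [Nat.cast_zero, zero_mul] at h1
    exact (ZMod.natCast_eq_zero_iff _ _).mp h1.symm
  obtain ⟨f, hf⟩ := hpei
  have hμpow : μ i ^ (N / p) = ζu ^ (e i * (N / p)) := by rw [hμe i hi, ← pow_mul]
  rw [hμpow]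
  have hdv : N ∣ e i * (N / p) := by
    refine ⟨f, ?_⟩
    rw [hf]
    rw [mul_comm p f, mul_assoc, Nat.mul_div_cancel' hpN]
    ring
  obtain ⟨g0, hg0⟩ := hdv
  rw [hg0, pow_mul, hζuN, one_pow]

lemma squarefree_dvd_factorial' {m : ℕ} : ∀ N : ℕ, Squarefree N →
    (∀ p : ℕ, p.Prime → p ∣ N → p ≤ m) → N ∣ Nat.factorial m := by
  intro N
  induction N using Nat.strong_induction_on with
  | _ N ih =>
    intro hsf hp
    rcases eq_or_ne N 1 with rfl | hN1
    · exact one_dvd _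
    have hN0 : N ≠ 0 := by
      rintro rfl
      exact not_squarefree_zero hsf
    set p := N.minFac with hpdef
    have hpp : p.Prime := Nat.minFac_prime hN1
    obtain ⟨t, ht⟩ := Nat.minFac_dvd N
    have hpt : ¬ p ∣ t := by
      intro hdvd
      obtain ⟨u, hu⟩ := hdvd
      have : p * p ∣ N := ⟨u, by rw [ht, hu]; ring⟩
      exact hpp.not_isUnit (hsf p this)
    have ht0 : t ≠ 0 := by rintro rfl; simp at ht; exact hN0 ht
    have htN : t < N := by
      have h1 : 1 < p := hpp.one_lt
      have h2 := Nat.pos_of_ne_zero ht0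
      nlinarith [ht.symm]
    have hsft : Squarefree t := hsf.squarefree_of_dvd ⟨p, by rw [ht]; ring⟩
    have htdvd : t ∣ Nat.factorial m := by
      apply ih t htN hsft
      intro q hq hqt
      exact hp q hq (hqt.trans ⟨p, by rw [ht]; ring⟩)
    have hpdvd : p ∣ Nat.factorial m := Nat.dvd_factorial hpp.pos (hp p hpp (Nat.minFac_dvd N))
    have hcop : Nat.Coprime p t := (Nat.Prime.coprime_iff_not_dvd hpp).mpr hpt
    rw [ht]
    exact Nat.Coprime.mul_dvd_of_dvd_of_dvd hcop hpdvd htdvd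

/-- **Mann's theorem**: in a minimal vanishing rational combination of roots of
unity, all ratios of the roots of unity have order dividing `(card)!`. -/
theorem mann_finset {ι : Type*} [DecidableEq ι] (s : Finset ι) (r : ι → ℚ) (ζ : ι → ℂˣ)
    (htor : ∀ i ∈ s, IsOfFinOrder (ζ i))
    (hsum : ∑ i ∈ s, (r i : ℂ) * ((ζ i : ℂˣ) : ℂ) = 0)
    (hmin : ∀ T ⊆ s, T.Nonempty → T ≠ s → ∑ i ∈ T, (r i : ℂ) * ((ζ i : ℂˣ) : ℂ) ≠ 0) :
    ∀ i ∈ s, ∀ j ∈ s, (ζ i * (ζ j)⁻¹) ^ (Nat.factorial s.card) = 1 := by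
  classical
  rcases s.eq_empty_or_nonempty with rfl | ⟨i₀, hi₀s⟩
  · intro i hi; simp at hi
  set μ : ι → ℂˣ := fun i => ζ i * (ζ i₀)⁻¹ with hμdef
  have hμtor : ∀ i ∈ s, IsOfFinOrder (μ i) := by
    intro i hi
    exact (htor i hi).mul (htor i₀ hi₀s).inv
  have hμi₀ : μ i₀ = 1 := by simp [hμdef]
  set N : ℕ := s.lcm (fun i => orderOf (μ i)) with hNdef
  have hdvdN : ∀ i ∈ s, orderOf (μ i) ∣ N := fun i hi => Finset.dvd_lcm hi
  have hN0 : 0 < N := by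
    rcases Nat.eq_zero_or_pos N with h | h
    · exfalso
      rw [hNdef] at h
      rw [Finset.lcm_eq_zero_iff] at h
      obtain ⟨i, hi, hoi⟩ := h
      exact ((hμtor i hi).orderOf_pos).ne' hoi
    · exact h
  have hNpow : ∀ i ∈ s, μ i ^ N = 1 := fun i hi =>
    orderOf_dvd_iff_pow_eq_one.mp (hdvdN i hi)
  have hμsum : ∑ i ∈ s, (r i : ℂ) * ((μ i : ℂˣ) : ℂ) = 0 := by
    have : ∑ i ∈ s, (r i : ℂ) * ((μ i : ℂˣ) : ℂ)
        = (∑ i ∈ s, (r i : ℂ) * ((ζ i : ℂˣ) : ℂ)) * (((ζ i₀)⁻¹ : ℂˣ) : ℂ) := by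
      rw [Finset.sum_mul]
      apply Finset.sum_congr rfl
      intro i _
      simp [hμdef]
      ring
    rw [this, hsum, zero_mul]
  have hμmin : ∀ T ⊆ s, T.Nonempty → T ≠ s → ∑ i ∈ T, (r i : ℂ) * ((μ i : ℂˣ) : ℂ) ≠ 0 := by
    intro T hTs hTne hTneq h0
    apply hmin T hTs hTne hTneq
    have h1 : ∑ i ∈ T, (r i : ℂ) * ((μ i : ℂˣ) : ℂ)
        = (∑ i ∈ T, (r i : ℂ) * ((ζ i : ℂˣ) : ℂ)) * (((ζ i₀)⁻¹ : ℂˣ) : ℂ) := by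
      rw [Finset.sum_mul]
      apply Finset.sum_congr rfl
      intro i _
      simp [hμdef]
      ring
    rw [h1] at h0
    rcases mul_eq_zero.mp h0 with h | h
    · exact h
    · exfalso
      exact (Units.ne_zero _) h
  -- N is squarefree with prime factors at most s.card
  have hkey : ∀ p : ℕ, p.Prime → p ∣ N → p ≤ s.card ∧ ¬ (p * p ∣ N) := by
    intro p hpp hpN
    by_contra hbad
    have hcase : s.card < p ∨ p * p ∣ N := by
      by_cases h1 : p ≤ s.card
      · right
        by_contra h2
        exact hbad ⟨h1, h2⟩
      · left; omega
    have hcore := mann_core s r μ hi₀s hμi₀ hN0 hNpow hμsum hμmin hpp hpN hcase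
    have hdvd2 : N ∣ N / p := by
      rw [hNdef]
      apply Finset.lcm_dvd
      intro i hi
      exact orderOf_dvd_iff_pow_eq_one.mpr (hcore i hi)
    have hNp_lt : N / p < N := Nat.div_lt_self hN0 hpp.one_lt
    have hNp_pos : 0 < N / p := Nat.div_pos (Nat.le_of_dvd hN0 hpN) hpp.pos
    have := Nat.le_of_dvd hNp_pos hdvd2
    omega
  have hsf : Squarefree N := by
    rw [Nat.squarefree_iff_prime_squarefree]
    intro p hpp hdvd
    exact (hkey p hpp (dvd_trans ⟨p, rfl⟩ hdvd)).2 hdvd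
  have hNdvd : N ∣ Nat.factorial s.card :=
    squarefree_dvd_factorial' N hsf (fun p hpp hpN => (hkey p hpp hpN).1)
  -- conclude
  have hμfact : ∀ i ∈ s, μ i ^ (Nat.factorial s.card) = 1 := by
    intro i hi
    obtain ⟨d, hd⟩ := hNdvd
    rw [hd, pow_mul, hNpow i hi, one_pow]
  intro i hi j hj
  have h1 : ζ i * (ζ j)⁻¹ = μ i * (μ j)⁻¹ := by
    simp only [hμdef]
    group
  rw [h1, mul_pow, hμfact i hi, inv_pow, hμfact j hj, inv_one, mul_one]



/-- The set of roots of unity in `ℂ`. -/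
def RootsU : Set ℂ := {z : ℂ | ∃ m : ℕ, 0 < m ∧ z ^ m = 1}

lemma one_mem_RootsU : (1 : ℂ) ∈ RootsU := ⟨1, one_pos, one_pow 1⟩

lemma RootsU_mul {x y : ℂ} (hx : x ∈ RootsU) (hy : y ∈ RootsU) : x * y ∈ RootsU := by
  obtain ⟨m, hm, hxm⟩ := hx
  obtain ⟨k, hk, hyk⟩ := hy
  refine ⟨m * k, Nat.mul_pos hm hk, ?_⟩
  rw [mul_pow, pow_mul, hxm, one_pow, one_mul, mul_comm m k, pow_mul, hyk, one_pow]

/-- The `ℚ`-span of the roots of unity. -/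
noncomputable def spanRU : Submodule ℚ ℂ := Submodule.span ℚ RootsU

lemma spanRU_mul {x y : ℂ} (hx : x ∈ spanRU) (hy : y ∈ spanRU) : x * y ∈ spanRU := by
  have h1 : x * y ∈ spanRU * spanRU := Submodule.mul_mem_mul hx hy
  have h2 : spanRU * spanRU = Submodule.span ℚ (RootsU * RootsU) :=
    Submodule.span_mul_span ℚ RootsU RootsU
  have h3 : RootsU * RootsU ⊆ RootsU := by
    rintro z ⟨a, ha, b, hb, rfl⟩
    exact RootsU_mul ha hb
  rw [h2] at h1
  exact Submodule.span_le.mpr (le_trans h3 Submodule.subset_span) h1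

lemma setPow_finite (M : ℕ) (h : 0 < M) : Set.Finite {z : ℂ | z ^ M = 1} := by
  apply Set.Finite.subset (Polynomial.nthRoots M (1 : ℂ)).toFinset.finite_toSet
  intro z hz
  simp only [Finset.coe_sort_coe, Multiset.mem_toFinset, Finset.mem_coe]
  rw [Polynomial.mem_nthRoots h]
  exact hz

lemma spanRU_inv {x : ℂ} (hx : x ∈ spanRU) : x⁻¹ ∈ spanRU := by
  classical
  rcases eq_or_ne x 0 with rfl | hx0
  · rw [inv_zero]; exact Submodule.zero_mem _
  obtain ⟨T, hTsub, hxT⟩ := Submodule.mem_span_finite_of_mem_span hx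
  -- common exponent
  set mz : ℂ → ℕ := fun z => if h : z ∈ RootsU then h.choose else 1 with hmzdef
  have hmz : ∀ z ∈ RootsU, 0 < mz z ∧ z ^ (mz z) = 1 := by
    intro z hz
    simp only [hmzdef, dif_pos hz]
    exact hz.choose_spec
  set M : ℕ := ∏ z ∈ T, mz z with hMdef
  have hM0 : 0 < M := by
    apply Finset.prod_pos
    intro z hz
    exact (hmz z (hTsub hz)).1
  have hTU : (T : Set ℂ) ⊆ {z : ℂ | z ^ M = 1} := by
    intro z hz
    obtain ⟨hm0, hzm⟩ := hmz z (hTsub hz)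
    obtain ⟨d, hd⟩ := Finset.dvd_prod_of_mem mz hz
    show z ^ M = 1
    rw [hMdef, hd, pow_mul, hzm, one_pow]
  set U : Set ℂ := {z : ℂ | z ^ M = 1} with hUdef
  have hUfin : U.Finite := setPow_finite M hM0
  have hUsub : U ⊆ RootsU := fun z hz => ⟨M, hM0, hz⟩
  have hUmul : ∀ a ∈ U, ∀ b ∈ U, a * b ∈ U := by
    intro a ha b hb
    show (a * b) ^ M = 1
    rw [mul_pow, ha.out, hb.out, one_mul]
  set W : Submodule ℚ ℂ := Submodule.span ℚ U with hWdef
  haveI : FiniteDimensional ℚ (↥W) := FiniteDimensional.span_of_finite ℚ hUfin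
  have hWmul : ∀ a ∈ W, ∀ b ∈ W, a * b ∈ W := by
    intro a ha b hb
    have h1 : a * b ∈ W * W := Submodule.mul_mem_mul ha hb
    have h2 : W * W = Submodule.span ℚ (U * U) := Submodule.span_mul_span ℚ U U
    have h3 : U * U ⊆ U := by
      rintro z ⟨c, hc, d, hd, rfl⟩
      exact hUmul c hc d hd
    rw [h2] at h1
    exact Submodule.span_le.mpr (le_trans h3 Submodule.subset_span) h1
  have hxW : x ∈ W := by
    apply Submodule.span_mono hTU
    exact hxT
  have h1W : (1 : ℂ) ∈ W := Submodule.subset_span (show (1:ℂ) ^ M = 1 from one_pow M)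
  -- multiplication by x as a linear endomorphism of W
  set f : (↥W) →ₗ[ℚ] (↥W) := {
    toFun := fun v => ⟨x * (v : ℂ), hWmul x hxW v v.2⟩
    map_add' := by
      intro v1 v2
      ext
      simp [mul_add]
    map_smul' := by
      intro q v
      ext
      simp [Submodule.coe_smul] } with hfdef
  have hfinj : Function.Injective f := by
    intro v1 v2 hv
    have h1 : x * (v1 : ℂ) = x * (v2 : ℂ) := by
      have := congrArg (fun u : ↥W => (u : ℂ)) hv
      simpa [hfdef] using this
    ext
    exact mul_left_cancel₀ hx0 h1
  have hfsurj : Function.Surjective f := (LinearMap.injective_iff_surjective).mp hfinj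
  obtain ⟨y, hy⟩ := hfsurj ⟨1, h1W⟩
  have hxy : x * (y : ℂ) = 1 := by
    have := congrArg (fun u : ↥W => (u : ℂ)) hy
    simpa [hfdef] using this
  have hinv : x⁻¹ = (y : ℂ) := by
    field_simp at hxy ⊢
    rw [← hxy]
  rw [hinv]
  have : (y : ℂ) ∈ W := y.2
  exact Submodule.span_le.mpr (le_trans hUsub Submodule.subset_span) this

/-- The subfield of `ℂ` consisting of `ℚ`-linear combinations of roots of unity,
packaged as an intermediate field of `ℚ ⊆ ℂ`. -/
noncomputable def EF : IntermediateField ℚ ℂ where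
  carrier := spanRU
  mul_mem' := spanRU_mul
  one_mem' := Submodule.subset_span one_mem_RootsU
  add_mem' := fun ha hb => Submodule.add_mem _ ha hb
  zero_mem' := Submodule.zero_mem _
  algebraMap_mem' := fun q => by
    have h1 : (1 : ℂ) ∈ spanRU := Submodule.subset_span one_mem_RootsU
    have := Submodule.smul_mem spanRU q h1
    simpa [Algebra.smul_def] using this
  inv_mem' := fun x h => spanRU_inv h

lemma mem_EF_iff {x : ℂ} : x ∈ EF ↔ x ∈ spanRU := ⟨fun h => h, fun h => h⟩

lemma RootsU_subset_EF : RootsU ⊆ (EF : Set ℂ) := fun z hz => show z ∈ spanRU from Submodule.subset_span hz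


lemma isOfFinOrder_units_prod {ι : Type*} (s : Finset ι) (f : ι → ℂˣ)
    (h : ∀ i ∈ s, IsOfFinOrder (f i)) : IsOfFinOrder (∏ i ∈ s, f i) := by
  have hmem : (∏ i ∈ s, f i) ∈ CommGroup.torsion ℂˣ := by
    apply Subgroup.prod_mem
    intro i hi
    exact (CommGroup.mem_torsion (f i)).mpr (h i hi)
  exact (CommGroup.mem_torsion _).mp hmem

/-- Laurent's theorem for a single "twisted polynomial"
`g(x) = ∑ i, r i * u i * x ^ (lam i)` with rational `r`, torsion `u`. -/
theorem goodCover_twisted {n : ℕ} {ι : Type} [Fintype ι] [DecidableEq ι]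
    (r : ι → ℚ) (u : ι → ℂˣ) (hu : ∀ i, IsOfFinOrder (u i)) (lam : ι → Fin n → ℕ) :
    GoodCover {x : Fin n → ℂˣ |
      ∑ i, (r i : ℂ) * ((u i : ℂˣ) : ℂ) * ∏ j, ((x j : ℂˣ) : ℂ) ^ lam i j = 0} := by
  classical
  set Z : Set (Fin n → ℂˣ) := {x : Fin n → ℂˣ |
      ∑ i, (r i : ℂ) * ((u i : ℂˣ) : ℂ) * ∏ j, ((x j : ℂˣ) : ℂ) ^ lam i j = 0} with hZdef
  set Q : ℕ := Nat.factorial (Fintype.card ι) with hQdef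
  have hQ0 : 0 < Q := Nat.factorial_pos _
  haveI : NeZero Q := ⟨hQ0.ne'⟩
  set ρc : ℂ := Complex.exp (2 * Real.pi * Complex.I / Q) with hρcdef
  have hρ : IsPrimitiveRoot ρc Q := Complex.isPrimitiveRoot_exp Q hQ0.ne'
  have hρune : IsUnit ρc := hρ.isUnit hQ0.ne'
  set ρu : ℂˣ := hρune.unit with hρudef
  have hρuval : (ρu : ℂ) = ρc := hρune.unit_spec
  have hρuQ : ρu ^ Q = 1 := by
    ext
    rw [Units.val_pow_eq_pow_val, hρuval, hρ.pow_eq_one, Units.val_one]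
  have hρord : IsOfFinOrder ρu := isOfFinOrder_iff_pow_eq_one.mpr ⟨Q, hQ0, hρuQ⟩
  -- monomials (as units) and twisted terms
  set Xm : (Fin n → ℂˣ) → ι → ℂˣ := fun x i => ∏ j, (x j) ^ (lam i j) with hXmdef
  set ζf : (Fin n → ℂˣ) → ι → ℂˣ := fun x i => u i * Xm x i with hζfdef
  have hXmcoe : ∀ x i, ((Xm x i : ℂˣ) : ℂ) = ∏ j, ((x j : ℂˣ) : ℂ) ^ lam i j := by
    intro x i
    rw [hXmdef]
    simp only []
    rw [show ((∏ j, (x j) ^ (lam i j) : ℂˣ) : ℂ) = (Units.coeHom ℂ) (∏ j, (x j) ^ (lam i j))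
      from rfl, map_prod]
    simp
  have hgval : ∀ x : Fin n → ℂˣ,
      ∑ i, (r i : ℂ) * ((u i : ℂˣ) : ℂ) * ∏ j, ((x j : ℂˣ) : ℂ) ^ lam i j
      = ∑ i, (r i : ℂ) * ((ζf x i : ℂˣ) : ℂ) := by
    intro x
    apply Finset.sum_congr rfl
    intro i _
    rw [hζfdef]
    simp only [Units.val_mul]
    rw [hXmcoe x i]
    ring
  -- the coset attached to data (π, k)
  set Bc : (ι → ι) → (ι → Fin Q) → Set (Fin n → ℂˣ) := fun π k =>
    {x : Fin n → ℂˣ | ∀ i, ∏ j, x j ^ ((lam i j : ℤ) - (lam (π i) j : ℤ))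
      = (u (π i)) * (u i)⁻¹ * ρu ^ ((k i : ℕ))} with hBcdef
  have hsplit : ∀ (x : Fin n → ℂˣ) (π : ι → ι) (i : ι),
      ∏ j, x j ^ ((lam i j : ℤ) - (lam (π i) j : ℤ)) = Xm x i * (Xm x (π i))⁻¹ := by
    intro x π i
    rw [hXmdef]
    simp only []
    rw [← Finset.prod_inv_distrib, ← Finset.prod_mul_distrib]
    apply Finset.prod_congr rfl
    intro j _
    rw [zpow_sub, zpow_natCast, zpow_natCast]
  have hPred_sub : ∀ (π : ι → ι) (k : ι → Fin Q),
      (∀ b : ι, ∑ i ∈ Finset.univ.filter (fun i => π i = b),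
        (r i : ℂ) * ((ρu : ℂˣ) : ℂ) ^ ((k i : ℕ)) = 0) → Bc π k ⊆ Z := by
    intro π k hPred x hx
    rw [hZdef, Set.mem_setOf_eq, hgval x]
    have hterm : ∀ i, (r i : ℂ) * ((ζf x i : ℂˣ) : ℂ)
        = ((r i : ℂ) * ((ρu : ℂˣ) : ℂ) ^ ((k i : ℕ)))
          * (((u (π i) : ℂˣ) : ℂ) * ((Xm x (π i) : ℂˣ) : ℂ)) := by
      intro i
      have h1 := hx i
      rw [hsplit x π i] at h1
      have h2 : Xm x i = (u (π i)) * (u i)⁻¹ * ρu ^ ((k i : ℕ)) * Xm x (π i) := by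
        rw [← h1]
        group
      have h3 := congrArg (fun v : ℂˣ => (v : ℂ)) h2
      simp only [Units.val_mul] at h3
      rw [hζfdef]
      simp only [Units.val_mul]
      rw [h3]
      simp only [Units.val_pow_eq_pow_val, Units.val_inv_eq_inv_val]
      field_simp
    calc ∑ i, (r i : ℂ) * ((ζf x i : ℂˣ) : ℂ)
        = ∑ b, ∑ i ∈ Finset.univ.filter (fun i => π i = b),
            (r i : ℂ) * ((ζf x i : ℂˣ) : ℂ) :=
          (Finset.sum_fiberwise_of_maps_to (fun i _ => Finset.mem_univ (π i)) _).symm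
      _ = ∑ b, ∑ i ∈ Finset.univ.filter (fun i => π i = b),
            ((r i : ℂ) * ((ρu : ℂˣ) : ℂ) ^ ((k i : ℕ)))
              * (((u b : ℂˣ) : ℂ) * ((Xm x b : ℂˣ) : ℂ)) := by
          apply Finset.sum_congr rfl
          intro b _
          apply Finset.sum_congr rfl
          intro i hi
          have hib : π i = b := (Finset.mem_filter.mp hi).2
          rw [hterm i, hib]
      _ = ∑ b, (((u b : ℂˣ) : ℂ) * ((Xm x b : ℂˣ) : ℂ))
            * ∑ i ∈ Finset.univ.filter (fun i => π i = b),
              (r i : ℂ) * ((ρu : ℂˣ) : ℂ) ^ ((k i : ℕ)) := by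
          apply Finset.sum_congr rfl
          intro b _
          rw [Finset.mul_sum]
          apply Finset.sum_congr rfl
          intro i _
          ring
      _ = 0 := by
          apply Finset.sum_eq_zero
          intro b _
          rw [hPred b, mul_zero]
  -- the family of candidate cosets
  set Pred : (ι → ι) × (ι → Fin Q) → Prop := fun pk =>
    ∀ b : ι, ∑ i ∈ Finset.univ.filter (fun i => pk.1 i = b),
      (r i : ℂ) * ((ρu : ℂˣ) : ℂ) ^ ((pk.2 i : ℕ)) = 0 with hPreddef
  set Bfam : (ι → ι) × (ι → Fin Q) → Set (Fin n → ℂˣ) := fun pk =>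
    if Pred pk then Bc pk.1 pk.2 else ∅ with hBfamdef
  have hBfam_tc : ∀ pk, IsTorsionCoset (Bfam pk) := by
    intro pk
    simp only [hBfamdef]
    by_cases h : Pred pk
    · rw [if_pos h]
      simp only [hBcdef]
      apply isTorsionCoset_of (ι := ι)
      intro i
      exact ((hu (pk.1 i)).mul (hu i).inv).mul (hρord.pow)
    · rw [if_neg h]
      exact isTorsionCoset_empty
  have hBfam_sub : ∀ pk, Bfam pk ⊆ Z := by
    intro pk
    simp only [hBfamdef]
    by_cases h : Pred pk
    · rw [if_pos h]
      exact hPred_sub pk.1 pk.2 (by rw [hPreddef] at h; exact h)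
    · rw [if_neg h]
      exact Set.empty_subset _
  -- covering of torsion points
  have hcov : ∀ x : Fin n → ℂˣ, IsOfFinOrder x → x ∈ Z → ∃ pk, x ∈ Bfam pk := by
    intro x hxtor hxZ
    have hxj : ∀ j, IsOfFinOrder (x j) := fun j => pi_isOfFinOrder_apply hxtor j
    have hζtor : ∀ i, IsOfFinOrder (ζf x i) := by
      intro i
      rw [hζfdef]
      apply (hu i).mul
      apply isOfFinOrder_units_prod
      intro j _
      exact (hxj j).pow
    have hvsum : ∑ i ∈ Finset.univ, (fun i => (r i : ℂ) * ((ζf x i : ℂˣ) : ℂ)) i = 0 := by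
      rw [← hgval x]
      exact hxZ
    obtain ⟨π, hπmem, hπidem, _, hπfib⟩ :=
      exists_partition_min (fun i => (r i : ℂ) * ((ζf x i : ℂˣ) : ℂ)) Finset.univ hvsum
    -- for each i, the ratio ζ i / ζ (π i) is a Q-th root of unity
    have hratio : ∀ i, (ζf x i * (ζf x (π i))⁻¹) ^ Q = 1 := by
      intro i
      set b := π i with hbdef
      set fb := Finset.univ.filter (fun i' => π i' = b) with hfbdef
      have hib : i ∈ fb := by
        rw [hfbdef]
        simp [hbdef]
      have hbb : b ∈ fb := by
        rw [hfbdef]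
        simp only [Finset.mem_filter, Finset.mem_univ, true_and]
        rw [hbdef]
        exact hπidem i (Finset.mem_univ i)
      have hfibprops := hπfib b (Finset.mem_univ b) ⟨i, hib⟩
      have hmann := mann_finset fb r (ζf x) (fun i' _ => hζtor i')
        hfibprops.1 (fun T hT hTne hTneq => hfibprops.2 T hT hTne hTneq)
      have h1 := hmann i hib b hbb
      have hdvd : Nat.factorial fb.card ∣ Q := by
        rw [hQdef]
        apply Nat.factorial_dvd_factorial
        exact Finset.card_filter_le _ _
      obtain ⟨d, hd⟩ := hdvd
      rw [hd, pow_mul, h1, one_pow]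
    have hex : ∀ i, ∃ m : ℕ, m < Q ∧ ρc ^ m = ((ζf x i * (ζf x (π i))⁻¹ : ℂˣ) : ℂ) := by
      intro i
      have h1 : (((ζf x i * (ζf x (π i))⁻¹ : ℂˣ) : ℂ)) ^ Q = 1 := by
        rw [← Units.val_pow_eq_pow_val, hratio i, Units.val_one]
      obtain ⟨m, hm, hm2⟩ := hρ.eq_pow_of_pow_eq_one h1
      exact ⟨m, hm, hm2⟩
    set kf : ι → Fin Q := fun i => ⟨(hex i).choose, (hex i).choose_spec.1⟩ with hkfdef
    have hkf : ∀ i, ρu ^ ((kf i : ℕ)) = ζf x i * (ζf x (π i))⁻¹ := by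
      intro i
      ext
      rw [Units.val_pow_eq_pow_val, hρuval]
      exact (hex i).choose_spec.2
    refine ⟨⟨π, kf⟩, ?_⟩
    have hPredh : Pred ⟨π, kf⟩ := by
      rw [hPreddef]
      intro b
      simp only []
      rcases (Finset.univ.filter (fun i => π i = b)).eq_empty_or_nonempty with he | hne
      · rw [he, Finset.sum_empty]
      · have hfibprops := hπfib b (Finset.mem_univ b) hne
        have hfz := hfibprops.1
        calc ∑ i ∈ Finset.univ.filter (fun i => π i = b),
              (r i : ℂ) * ((ρu : ℂˣ) : ℂ) ^ ((kf i : ℕ))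
            = ∑ i ∈ Finset.univ.filter (fun i => π i = b),
              ((r i : ℂ) * ((ζf x i : ℂˣ) : ℂ)) * (((ζf x b)⁻¹ : ℂˣ) : ℂ) := by
              apply Finset.sum_congr rfl
              intro i hi
              have hib : π i = b := (Finset.mem_filter.mp hi).2
              have h2 := congrArg (fun v : ℂˣ => (v : ℂ)) (hkf i)
              simp only [Units.val_pow_eq_pow_val, Units.val_mul] at h2
              rw [h2, hib]
              ring
          _ = (∑ i ∈ Finset.univ.filter (fun i => π i = b),
              (r i : ℂ) * ((ζf x i : ℂˣ) : ℂ)) * (((ζf x b)⁻¹ : ℂˣ) : ℂ) := by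
              rw [Finset.sum_mul]
          _ = 0 := by rw [hfz, zero_mul]
    simp only [hBfamdef]
    rw [if_pos hPredh]
    simp only [hBcdef]
    intro i
    rw [hsplit x π i]
    rw [hkf i]
    have h2 : ζf x i = u i * Xm x i := by rw [hζfdef]
    have h3 : ζf x (π i) = u (π i) * Xm x (π i) := by rw [hζfdef]
    rw [h2, h3]
    rw [Units.ext_iff]
    simp only [Units.val_mul, Units.val_inv_eq_inv_val]
    field_simp
  -- assemble
  obtain ⟨e⟩ := Fintype.truncEquivFin ((ι → ι) × (ι → Fin Q))
  refine ⟨Fintype.card ((ι → ι) × (ι → Fin Q)), fun m => Bfam (e.symm m),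
    fun m => hBfam_tc _, fun m => hBfam_sub _, ?_⟩
  intro x hxtor
  constructor
  · intro hxZ
    obtain ⟨pk, hpk⟩ := hcov x hxtor hxZ
    exact ⟨e pk, by simpa using hpk⟩
  · rintro ⟨m, hm⟩
    exact hBfam_sub _ hm

lemma coord_as_roots_combo (q : ↥EF) :
    ∃ cfs : ℂ →₀ ℚ, ↑cfs.support ⊆ RootsU ∧ (cfs.sum fun w t => t • w) = (q : ℂ) :=
  Submodule.mem_span_set.mp q.2

end Laurent

open Laurent in
/-- **Laurent's theorem** (effective form): the torsion points of the zero set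
`V ⊆ (ℂ*)ⁿ` of finitely many polynomials are covered by finitely many torsion
cosets contained in `V`. -/
theorem torsion_points_eq_union_torsion_cosets (n k : ℕ) (hn : 1 ≤ n)
    (F : Fin k → MvPolynomial (Fin n) ℂ)
    (V : Set (Fin n → ℂˣ))
    (hV : V = {x : Fin n → ℂˣ | ∀ i, MvPolynomial.eval (fun j => (x j : ℂ)) (F i) = 0}) :
    ∃ (t : ℕ) (B : Fin t → Set (Fin n → ℂˣ)),
      (∀ i, IsTorsionCoset (B i)) ∧ (∀ i, B i ⊆ V) ∧
      {x ∈ V | IsOfFinOrder x} = ⋃ i, {x ∈ B i | IsOfFinOrder x} := by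
  classical
  set bb := Module.Basis.ofVectorSpace EF ℂ with hbbdef
  set G : Fin k → ↑(Module.Basis.ofVectorSpaceIndex EF ℂ) → (Fin n → ℂˣ) → ℂ := fun i β x =>
    ∑ d ∈ (F i).support, ((bb.repr ((F i).coeff d)) β : ℂ) * ∏ j, ((x j : ℂˣ) : ℂ) ^ d j
    with hGdef
  set Bs : Fin k → Finset ↑(Module.Basis.ofVectorSpaceIndex EF ℂ) := fun i =>
    (F i).support.biUnion (fun d => (bb.repr ((F i).coeff d)).support) with hBsdef
  -- coefficients as combinations of basis elements
  have hco : ∀ (i : Fin k), ∀ d ∈ (F i).support,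
      (F i).coeff d = ∑ β ∈ Bs i, ((bb.repr ((F i).coeff d)) β : ℂ) * bb β := by
    intro i d hd
    have h1 := bb.linearCombination_repr ((F i).coeff d)
    rw [Finsupp.linearCombination_apply] at h1
    calc (F i).coeff d = (bb.repr ((F i).coeff d)).sum fun a c => c • bb a := h1.symm
      _ = ∑ a ∈ (bb.repr ((F i).coeff d)).support, (bb.repr ((F i).coeff d)) a • bb a := rfl
      _ = ∑ a ∈ Bs i, (bb.repr ((F i).coeff d)) a • bb a :=
          Finset.sum_subset
            (Finset.subset_biUnion_of_mem (fun d => (bb.repr ((F i).coeff d)).support) hd)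
            (fun β _ hβ => by rw [Finsupp.notMem_support_iff.mp hβ, zero_smul])
      _ = ∑ β ∈ Bs i, ((bb.repr ((F i).coeff d)) β : ℂ) * bb β :=
          Finset.sum_congr rfl (fun β _ => by
            rw [Algebra.smul_def, IntermediateField.algebraMap_apply])
  have claim1 : ∀ (i : Fin k) (x : Fin n → ℂˣ),
      MvPolynomial.eval (fun j => ((x j : ℂˣ) : ℂ)) (F i)
      = ∑ β ∈ Bs i, (bb β) * G i β x := by
    intro i x
    rw [MvPolynomial.eval_eq']
    calc ∑ d ∈ (F i).support, (F i).coeff d * ∏ j, ((x j : ℂˣ) : ℂ) ^ d j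
        = ∑ d ∈ (F i).support, ∑ β ∈ Bs i,
            (((bb.repr ((F i).coeff d)) β : ℂ) * bb β) * ∏ j, ((x j : ℂˣ) : ℂ) ^ d j := by
          apply Finset.sum_congr rfl
          intro d hd
          conv_lhs => rw [hco i d hd]
          rw [Finset.sum_mul]
      _ = ∑ β ∈ Bs i, ∑ d ∈ (F i).support,
            (((bb.repr ((F i).coeff d)) β : ℂ) * bb β) * ∏ j, ((x j : ℂˣ) : ℂ) ^ d j :=
          Finset.sum_comm
      _ = ∑ β ∈ Bs i, (bb β) * G i β x := by
          apply Finset.sum_congr rfl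
          intro β _
          simp only [hGdef]
          rw [Finset.mul_sum]
          apply Finset.sum_congr rfl
          intro d _
          ring
  -- torsion points have all monomial values in EF
  have hXE : ∀ (x : Fin n → ℂˣ), IsOfFinOrder x → ∀ d : Fin n →₀ ℕ,
      (∏ j, ((x j : ℂˣ) : ℂ) ^ d j) ∈ EF := by
    intro x hx d
    apply prod_mem
    intro j _
    apply pow_mem
    apply RootsU_subset_EF
    obtain ⟨m, hm0, hm1⟩ := isOfFinOrder_iff_pow_eq_one.mp (pi_isOfFinOrder_apply hx j)
    refine ⟨m, hm0, ?_⟩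
    rw [← Units.val_pow_eq_pow_val, hm1, Units.val_one]
  have claim2 : ∀ (i : Fin k) (x : Fin n → ℂˣ), IsOfFinOrder x →
      MvPolynomial.eval (fun j => ((x j : ℂˣ) : ℂ)) (F i) = 0 →
      ∀ β ∈ Bs i, G i β x = 0 := by
    intro i x hx h0 β hβ
    set GE : ↑(Module.Basis.ofVectorSpaceIndex EF ℂ) → ↥EF := fun β' =>
      ∑ d ∈ (F i).support, (bb.repr ((F i).coeff d)) β'
        * (⟨∏ j, ((x j : ℂˣ) : ℂ) ^ d j, hXE x hx d⟩ : ↥EF) with hGEdef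
    have hGEcoe : ∀ β', ((GE β' : ↥EF) : ℂ) = G i β' x := by
      intro β'
      rw [hGEdef, hGdef]
      simp only [AddSubmonoidClass.coe_finset_sum, MulMemClass.coe_mul]
    have hlin : ∑ β' ∈ Bs i, GE β' • bb β' = 0 := by
      have h1 : ∑ β' ∈ Bs i, GE β' • bb β' = ∑ β' ∈ Bs i, (bb β') * G i β' x := by
        apply Finset.sum_congr rfl
        intro β' _
        rw [Algebra.smul_def, IntermediateField.algebraMap_apply, hGEcoe β']
        ring
      rw [h1, ← claim1 i x, h0]
    have h2 := linearIndependent_iff'.mp bb.linearIndependent (Bs i) GE hlin β hβ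
    rw [← hGEcoe β, h2]
    rfl
  -- twisted representation of each G i β
  have hGtwist : ∀ (i : Fin k) (β : ↑(Module.Basis.ofVectorSpaceIndex EF ℂ)),
      GoodCover {x : Fin n → ℂˣ | G i β x = 0} := by
    intro i β
    set aW : Finset ℂ := (F i).support.biUnion
      (fun d => (coord_as_roots_combo ((bb.repr ((F i).coeff d)) β)).choose.support)
      with haWdef
    have haWU : ∀ w ∈ aW, w ∈ RootsU := by
      intro w hw
      rw [haWdef] at hw
      obtain ⟨d, _, hwd⟩ := Finset.mem_biUnion.mp hw
      exact (coord_as_roots_combo ((bb.repr ((F i).coeff d)) β)).choose_spec.1 hwd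
    have hWunit : ∀ w ∈ aW, ∃ uw : ℂˣ, (uw : ℂ) = w ∧ IsOfFinOrder uw := by
      intro w hw
      obtain ⟨m, hm0, hwm⟩ := haWU w hw
      have hUnit : IsUnit w := by
        apply IsUnit.of_mul_eq_one (a := w) (w ^ (m - 1))
        rw [← pow_succ']
        rw [show m - 1 + 1 = m by omega]
        exact hwm
      refine ⟨hUnit.unit, hUnit.unit_spec, ?_⟩
      apply isOfFinOrder_iff_pow_eq_one.mpr ⟨m, hm0, ?_⟩
      ext
      rw [Units.val_pow_eq_pow_val, hUnit.unit_spec, hwm, Units.val_one]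
    set ιt := ↥((F i).support ×ˢ aW) with hιtdef
    set rr : ιt → ℚ := fun t => (coord_as_roots_combo ((bb.repr ((F i).coeff t.1.1)) β)).choose t.1.2
      with hrrdef
    set uu : ιt → ℂˣ := fun t =>
      (hWunit t.1.2 (Finset.mem_product.mp t.2).2).choose with huudef
    have huuval : ∀ t : ιt, ((uu t : ℂˣ) : ℂ) = t.1.2 := fun t =>
      (hWunit t.1.2 (Finset.mem_product.mp t.2).2).choose_spec.1
    have huutor : ∀ t : ιt, IsOfFinOrder (uu t) := fun t =>
      (hWunit t.1.2 (Finset.mem_product.mp t.2).2).choose_spec.2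
    set ll : ιt → Fin n → ℕ := fun t j => t.1.1 j with hlldef
    have hGrep : ∀ x : Fin n → ℂˣ,
        G i β x = ∑ t : ιt, (rr t : ℂ) * ((uu t : ℂˣ) : ℂ) * ∏ j, ((x j : ℂˣ) : ℂ) ^ ll t j := by
      intro x
      have h1 : ∑ t : ιt, (rr t : ℂ) * ((uu t : ℂˣ) : ℂ) * ∏ j, ((x j : ℂˣ) : ℂ) ^ ll t j
          = ∑ dw ∈ (F i).support ×ˢ aW,
            ((coord_as_roots_combo ((bb.repr ((F i).coeff dw.1)) β)).choose dw.2 : ℂ)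
              * dw.2 * ∏ j, ((x j : ℂˣ) : ℂ) ^ dw.1 j := by
        rw [← Finset.sum_coe_sort ((F i).support ×ˢ aW)]
        apply Finset.sum_congr rfl
        intro t _
        rw [huuval t]
      rw [h1, Finset.sum_product, hGdef]
      simp only []
      apply Finset.sum_congr rfl
      intro d hd
      have h2 : (((bb.repr ((F i).coeff d)) β : ↥EF) : ℂ)
          = ∑ w ∈ aW, ((coord_as_roots_combo ((bb.repr ((F i).coeff d)) β)).choose w : ℂ) * w := by
        have h3 := (coord_as_roots_combo ((bb.repr ((F i).coeff d)) β)).choose_spec.2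
        calc (((bb.repr ((F i).coeff d)) β : ↥EF) : ℂ)
            = ((coord_as_roots_combo ((bb.repr ((F i).coeff d)) β)).choose.sum
                fun w t => t • w) := h3.symm
          _ = ∑ w ∈ (coord_as_roots_combo ((bb.repr ((F i).coeff d)) β)).choose.support,
                (coord_as_roots_combo ((bb.repr ((F i).coeff d)) β)).choose w • w := rfl
          _ = ∑ w ∈ aW, (coord_as_roots_combo ((bb.repr ((F i).coeff d)) β)).choose w • w :=
              Finset.sum_subset
                (Finset.subset_biUnion_of_mem
                  (fun d => (coord_as_roots_combo ((bb.repr ((F i).coeff d)) β)).choose.support)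
                  hd)
                (fun w _ hw => by rw [Finsupp.notMem_support_iff.mp hw, zero_smul])
          _ = ∑ w ∈ aW, ((coord_as_roots_combo ((bb.repr ((F i).coeff d)) β)).choose w : ℂ) * w :=
              Finset.sum_congr rfl (fun w _ => Rat.smul_def _ _)
      conv_lhs => rw [h2]
      rw [Finset.sum_mul]
    have hset : {x : Fin n → ℂˣ | G i β x = 0}
        = {x : Fin n → ℂˣ |
            ∑ t : ιt, (rr t : ℂ) * ((uu t : ℂˣ) : ℂ) * ∏ j, ((x j : ℂˣ) : ℂ) ^ ll t j = 0} := by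
      ext x
      rw [Set.mem_setOf_eq, Set.mem_setOf_eq, hGrep x]
    rw [hset]
    exact goodCover_twisted rr uu huutor ll
  -- assembly over all (i, β)
  set σ := (i : Fin k) × ↥(Bs i) with hσdef
  set Z : σ → Set (Fin n → ℂˣ) := fun t => {x : Fin n → ℂˣ | G t.1 ↑t.2 x = 0} with hZdef
  have hGCall : ∀ t : σ, GoodCover (Z t) := fun t => hGtwist t.1 ↑t.2
  obtain ⟨tN, B, hTC, hsub, hcover⟩ := goodCover_iInter Z hGCall
  have hIV : (⋂ t : σ, Z t) ⊆ V := by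
    intro x hx
    rw [hV]
    intro i
    rw [claim1 i x]
    apply Finset.sum_eq_zero
    intro β hβ
    have h1 : x ∈ Z ⟨i, ⟨β, hβ⟩⟩ := Set.mem_iInter.mp hx ⟨i, ⟨β, hβ⟩⟩
    rw [hZdef] at h1
    simp only [Set.mem_setOf_eq] at h1
    rw [h1, mul_zero]
  refine ⟨tN, B, hTC, fun m => (hsub m).trans hIV, ?_⟩
  ext x
  simp only [Set.mem_setOf_eq, Set.mem_iUnion]
  constructor
  · rintro ⟨hxV, hxt⟩
    have hxI : x ∈ ⋂ t : σ, Z t := by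
      apply Set.mem_iInter.mpr
      intro t
      rw [hZdef]
      simp only [Set.mem_setOf_eq]
      apply claim2 t.1 x hxt ?_ ↑t.2 t.2.2
      rw [hV] at hxV
      exact hxV t.1
    obtain ⟨m, hm⟩ := (hcover x hxt).mp hxI
    exact ⟨m, hm, hxt⟩
  · rintro ⟨m, hm, hxt⟩
    exact ⟨(hsub m).trans hIV hm, hxt⟩
end

section
/- Let n ≥ 1 and let p_1, …, p_{n!} be pairwise distinct prime numbers, each greater than 2n. Then there exist pairwise distinct natural numbers α_1, …, α_{2n} such that the polynomial f(X) := ∑_{i=1}^{n} X^{α_i} − ∑_{i=n+1}^{2n} X^{α_i} ∈ ℤ[X] satisfies: (1) X^{p_r} − 1 divides f(X) for every 1 ≤ r ≤ n!, and (2) X^{p_r p_{r'}} − 1 does not divide f(X) for every 1 ≤ r < r' ≤ n!. -/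
open Polynomial

private lemma dvd_X_pow_sub_X_pow_of_le (m a b : ℕ) (hab : b ≤ a) (h : a ≡ b [MOD m]) :
    (X ^ m - 1 : ℤ[X]) ∣ X ^ a - X ^ b := by
  obtain ⟨k, hk⟩ := (Nat.modEq_iff_dvd' hab).mp h.symm
  have ha : a = b + m * k := by omega
  subst ha
  have h1 : (X ^ m - 1 : ℤ[X]) ∣ (X ^ m) ^ k - 1 ^ k := sub_dvd_pow_sub_pow _ _ _
  have h2 : (X : ℤ[X]) ^ (b + m * k) - X ^ b = X ^ b * ((X ^ m) ^ k - 1 ^ k) := by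
    rw [mul_sub, ← pow_mul, ← pow_add, one_pow, mul_one]
  rw [h2]
  exact Dvd.dvd.mul_left h1 _

private lemma dvd_X_pow_sub_X_pow (m a b : ℕ) (h : a ≡ b [MOD m]) :
    (X ^ m - 1 : ℤ[X]) ∣ X ^ a - X ^ b := by
  rcases le_total b a with hab | hab
  · exact dvd_X_pow_sub_X_pow_of_le m a b hab h
  · have := dvd_X_pow_sub_X_pow_of_le m b a hab h.symm
    have h2 : (X : ℤ[X]) ^ a - X ^ b = -(X ^ b - X ^ a) := (neg_sub _ _).symm
    rw [h2]
    exact this.neg_right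

private lemma crt_exists {ι : Type*} [Fintype ι] (q : ι → ℕ) (hq0 : ∀ σ, q σ ≠ 0)
    (pp : Set.Pairwise (Finset.univ : Finset ι) (Function.onFun Nat.Coprime q)) (a : ι → ℕ) :
    ∃ x : ℕ, ∀ σ, x ≡ a σ [MOD q σ] :=
  ⟨Nat.chineseRemainderOfFinset a q Finset.univ (fun σ _ => hq0 σ) pp,
   fun σ => (Nat.chineseRemainderOfFinset a q Finset.univ (fun σ _ => hq0 σ) pp).2 σ
     (Finset.mem_univ σ)⟩

set_option maxHeartbeats 1000000 in
/-- Given `n!` pairwise distinct primes `p_r > 2n`, there is a polynomial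
`f = ∑_{i=1}^{n} X^{αᵢ} − ∑_{i=1}^{n} X^{βᵢ}` with pairwise distinct exponents,
divisible by each `X^{p_r} − 1` but by no `X^{p_r p_{r'}} − 1` with `r < r'`. -/
theorem exists_poly_many_separated_cyclotomic_factors (n : ℕ) (hn : 1 ≤ n)
    (p : Fin n.factorial → ℕ) (hp : ∀ r, (p r).Prime) (hinj : Function.Injective p)
    (hbig : ∀ r, 2 * n < p r) :
    ∃ α β : Fin n → ℕ,
      Function.Injective (Sum.elim α β : Fin n ⊕ Fin n → ℕ) ∧
      (∀ r, (X ^ (p r) - 1 : ℤ[X]) ∣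
        ((∑ i, X ^ (α i)) - ∑ i, X ^ (β i))) ∧
      (∀ r r' : Fin n.factorial, r < r' →
        ¬ (X ^ (p r * p r') - 1 : ℤ[X]) ∣
          ((∑ i, X ^ (α i)) - ∑ i, X ^ (β i))) := by
  classical
  have hcard : Fintype.card (Equiv.Perm (Fin n)) = n.factorial := by
    simp [Fintype.card_perm]
  let e : Equiv.Perm (Fin n) ≃ Fin n.factorial := Fintype.equivFinOfCardEq hcard
  set q : Equiv.Perm (Fin n) → ℕ := fun σ => p (e σ) with hq
  have hqp : ∀ σ, (q σ).Prime := fun σ => hp _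
  have hqinj : Function.Injective q := hinj.comp e.injective
  have hqbig : ∀ σ, 2 * n < q σ := fun σ => hbig _
  have pp : Set.Pairwise (Finset.univ : Finset (Equiv.Perm (Fin n)))
      (Function.onFun Nat.Coprime q) := by
    intro σ _ τ _ hne
    exact (Nat.coprime_primes (hqp σ) (hqp τ)).mpr fun h => hne (hqinj h)
  set M := ∏ σ : Equiv.Perm (Fin n), q σ with hM
  have hqM : ∀ σ, q σ ∣ M := fun σ => Finset.dvd_prod_of_mem q (Finset.mem_univ σ)
  have hle : ∀ σ, q σ ≤ M := fun σ =>
    Nat.le_of_dvd (Finset.prod_pos fun τ _ => (hqp τ).pos) (hqM σ)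
  -- CRT data
  choose b hbmod using fun i : Fin n =>
    crt_exists q (fun σ => (hqp σ).ne_zero) pp (fun σ => ((σ i : Fin n) : ℕ))
  set α : Fin n → ℕ := fun i => (i : ℕ) with hα
  set β : Fin n → ℕ := fun i => b i + M with hβ
  have hβmod : ∀ (i : Fin n) (σ : Equiv.Perm (Fin n)), β i ≡ ((σ i : Fin n) : ℕ) [MOD q σ] := by
    intro i σ
    have h2 : M ≡ 0 [MOD q σ] := Nat.modEq_zero_iff_dvd.mpr (hqM σ)
    simpa using (hbmod i σ).add h2
  have hnq : ∀ σ : Equiv.Perm (Fin n), n < q σ := fun σ => lt_of_le_of_lt (by omega) (hqbig σ)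
  have hβbig : ∀ i, n ≤ β i := fun i =>
    le_trans (le_trans (le_of_lt (hnq 1)) (hle 1)) (Nat.le_add_left _ _)
  refine ⟨α, β, ?_, ?_, ?_⟩
  · -- injectivity
    have hβinj : Function.Injective β := by
      intro i j hij
      have h1 : ((i : Fin n) : ℕ) ≡ ((j : Fin n) : ℕ) [MOD q 1] := by
        have := ((hβmod i 1).symm.trans (hij ▸ hβmod j 1))
        simpa using this
      exact Fin.ext (h1.eq_of_lt_of_lt (lt_trans i.isLt (hnq 1)) (lt_trans j.isLt (hnq 1)))
    rintro (i | i) (j | j) hij <;> simp only [Sum.elim_inl, Sum.elim_inr] at hij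
    · exact congrArg Sum.inl (Fin.ext hij)
    · exfalso
      have h1 : n ≤ β j := hβbig j
      have h2 : (i : ℕ) < n := i.isLt
      have h3 : (i : ℕ) = β j := hij
      omega
    · exfalso
      have h1 : n ≤ β i := hβbig i
      have h2 : (j : ℕ) < n := j.isLt
      have h3 : β i = (j : ℕ) := hij
      omega
    · exact congrArg Sum.inr (hβinj hij)
  · -- divisibility
    intro r
    set σ := e.symm r with hσ
    have hqσ : q σ = p r := by simp [hq, hσ]
    rw [← hqσ]
    have hsum : (∑ i, (X : ℤ[X]) ^ α i) = ∑ i, X ^ ((σ i : Fin n) : ℕ) :=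
      (Equiv.sum_comp σ (fun i => (X : ℤ[X]) ^ (i : ℕ))).symm
    rw [hsum, ← Finset.sum_sub_distrib]
    exact Finset.dvd_sum fun i _ => dvd_X_pow_sub_X_pow _ _ _ (hβmod i σ).symm
  · -- non-divisibility
    intro r r' hrr' hdvd
    set σ := e.symm r with hσ
    set τ := e.symm r' with hτ
    have hqσ : q σ = p r := by simp [hq, hσ]
    have hqτ : q τ = p r' := by simp [hq, hτ]
    have hστ : σ ≠ τ := fun h => (ne_of_lt hrr') (by
      have := congrArg e h; simpa [hσ, hτ] using this)
    obtain ⟨i0, hi0⟩ : ∃ i, σ i ≠ τ i := by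
      by_contra h
      push_neg at h
      exact hστ (Equiv.ext h)
    set m := p r * p r' with hm
    have hm' : m = q σ * q τ := by rw [hm, hqσ, hqτ]
    have hmpos : 0 < m := Nat.mul_pos (hp r).pos (hp r').pos
    have hqσm : q σ ∣ m := hm' ▸ dvd_mul_right _ _
    have hqτm : q τ ∣ m := hm' ▸ dvd_mul_left _ _
    set c := β i0 % m with hc
    -- no α-exponent is congruent to c
    have hαne : ∀ i : Fin n, α i % m ≠ c := by
      intro i h
      have h1 : α i ≡ β i0 [MOD m] := h
      have h2 : ((i : Fin n) : ℕ) ≡ ((σ i0 : Fin n) : ℕ) [MOD q σ] :=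
        (h1.of_dvd hqσm).trans (hβmod i0 σ)
      have h3 : ((i : Fin n) : ℕ) ≡ ((τ i0 : Fin n) : ℕ) [MOD q τ] :=
        (h1.of_dvd hqτm).trans (hβmod i0 τ)
      have e2 : i = σ i0 := Fin.ext
        (h2.eq_of_lt_of_lt (lt_trans i.isLt (hnq σ)) (lt_trans (σ i0).isLt (hnq σ)))
      have e3 : i = τ i0 := Fin.ext
        (h3.eq_of_lt_of_lt (lt_trans i.isLt (hnq τ)) (lt_trans (τ i0).isLt (hnq τ)))
      exact hi0 (e2 ▸ e3)
    set g : ℤ[X] := (∑ i, X ^ (α i % m)) - ∑ i, X ^ (β i % m) with hg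
    have hcoeff : g.coeff c < 0 := by
      rw [hg, coeff_sub, finset_sum_coeff, finset_sum_coeff]
      simp only [coeff_X_pow]
      have hz : (∑ i : Fin n, if c = α i % m then (1 : ℤ) else 0) = 0 :=
        Finset.sum_eq_zero fun i _ => if_neg fun hcc => hαne i hcc.symm
      have hpos : (1 : ℤ) ≤ ∑ i : Fin n, if c = β i % m then (1 : ℤ) else 0 := by
        have := Finset.single_le_sum (f := fun i : Fin n => if c = β i % m then (1 : ℤ) else 0)
          (fun i _ => by split <;> norm_num) (Finset.mem_univ i0)
        simpa [hc] using this
      rw [hz]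
      linarith
    have hgne : g ≠ 0 := fun h => by simp [h] at hcoeff
    -- X^m - 1 divides f - g
    have hdiff : (X ^ m - 1 : ℤ[X]) ∣ ((∑ i, X ^ (α i)) - ∑ i, X ^ (β i)) - g := by
      have hrw : ((∑ i, (X : ℤ[X]) ^ (α i)) - ∑ i, X ^ (β i)) - g =
          (∑ i, ((X : ℤ[X]) ^ (α i) - X ^ (α i % m))) -
          ∑ i, ((X : ℤ[X]) ^ (β i) - X ^ (β i % m)) := by
        rw [hg, Finset.sum_sub_distrib, Finset.sum_sub_distrib]
        ring
      rw [hrw]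
      exact dvd_sub
        (Finset.dvd_sum fun i _ => dvd_X_pow_sub_X_pow _ _ _ (Nat.mod_modEq _ _).symm)
        (Finset.dvd_sum fun i _ => dvd_X_pow_sub_X_pow _ _ _ (Nat.mod_modEq _ _).symm)
    have hgdvd : (X ^ m - 1 : ℤ[X]) ∣ g := by
      have := dvd_sub hdvd hdiff
      simpa using this
    -- degree contradiction
    have hdeg1 : (X ^ m - 1 : ℤ[X]).natDegree = m := by
      have : (X ^ m - 1 : ℤ[X]) = X ^ m - C 1 := by simp
      rw [this, natDegree_X_pow_sub_C]
    have hdegle : g.natDegree ≤ m - 1 := by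
      rw [hg]
      refine le_trans (natDegree_sub_le _ _) (max_le ?_ ?_)
      · exact natDegree_sum_le_of_forall_le _ _ fun i _ => by
          rw [natDegree_X_pow]
          have := Nat.mod_lt (α i) hmpos
          omega
      · exact natDegree_sum_le_of_forall_le _ _ fun i _ => by
          rw [natDegree_X_pow]
          have := Nat.mod_lt (β i) hmpos
          omega
    have := natDegree_le_of_dvd hgdvd hgne
    rw [hdeg1] at this
    omega
end
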